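/- arXiv:2402.17552 — 9 statements merged into one kernel-verified Lean document; each statement's English description precedes it below -/
import Mathlib

section
/- Let A ∈ L(K,H), let W ∈ L(H) be Krein-selfadjoint, and let x ∈ H. Then a vector u ∈ K is a W-ILSS of the equation Az = x if and only if ran A is W-nonnegative and A^# W (Au − x) = 0. -/
open ContinuousLinearMap

noncomputable section

variable {H K : Type*} [NormedAddCommGroup H] [InnerProductSpace ℂ H] [CompleteSpace H]
  [NormedAddCommGroup K] [InnerProductSpace ℂ K] [CompleteSpace K]

/-- The Krein adjoint `A^# = J_K ∘ A* ∘ J_H` of an operator `A : K →L[ℂ] H` between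
Krein spaces with signature operators `JK` and `JH`. -/
def kreinAdjoint (JK : K →L[ℂ] K) (JH : H →L[ℂ] H) (A : K →L[ℂ] H) : H →L[ℂ] K :=
  JK ∘L (ContinuousLinearMap.adjoint A) ∘L JH

/-- `u` is an indefinite weighted least squares solution (W-ILSS) of `A z = x`:
`[W(Au−x),Au−x] ≤ [W(Az−x),Az−x]` for all `z`, where `[x,y] = ⟨J_H x, y⟩`. -/
def IsWILSS (JH : H →L[ℂ] H) (A : K →L[ℂ] H) (W : H →L[ℂ] H) (x : H) (u : K) : Prop :=
  ∀ z : K,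
    (inner ℂ (JH (W (A u - x))) (A u - x) : ℂ).re ≤
      (inner ℂ (JH (W (A z - x))) (A z - x) : ℂ).re

/-- Elementary fact: if `0 ≤ 2 t a + t² b` for all real `t`, then `a = 0`. -/
lemma quad_aux {a b : ℝ} (h : ∀ t : ℝ, 0 ≤ 2 * t * a + t ^ 2 * b) : a = 0 := by
  have hb : 0 ≤ b := by have h1 := h 1; have h2 := h (-1); nlinarith
  have hbpos : 0 < b + 1 := by linarith
  have h3 := h (-a / (b + 1))
  have key : 0 ≤ -2 * a ^ 2 * (b + 1) + a ^ 2 * b := by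
    have e1 : 2 * (-a / (b + 1)) * a + (-a / (b + 1)) ^ 2 * b
        = (-2 * a ^ 2 * (b + 1) + a ^ 2 * b) / (b + 1) ^ 2 := by
      field_simp
    rw [e1] at h3
    have h4 := (le_div_iff₀ (by positivity : (0:ℝ) < (b + 1) ^ 2)).mp h3
    linarith [h4]
  have ha2 : a ^ 2 = 0 := by nlinarith [sq_nonneg a, mul_nonneg (sq_nonneg a) hb]
  exact sq_eq_zero_iff.mp ha2

/-- Expansion of the (possibly indefinite) quadratic form of a selfadjoint operator. -/
lemma expand_re {B : H →L[ℂ] H} (hB : ContinuousLinearMap.adjoint B = B) (e v : H) :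
    (inner ℂ (B (e + v)) (e + v) : ℂ).re =
      (inner ℂ (B e) e : ℂ).re + 2 * (inner ℂ (B e) v : ℂ).re + (inner ℂ (B v) v : ℂ).re := by
  have h1 : (inner ℂ (B v) e : ℂ) = starRingEnd ℂ (inner ℂ (B e) v : ℂ) := by
    conv_lhs => rw [← hB]
    rw [ContinuousLinearMap.adjoint_inner_left, ← inner_conj_symm]
  have h2 : (inner ℂ (B (e + v)) (e + v) : ℂ) =
      inner ℂ (B e) e + inner ℂ (B e) v + inner ℂ (B v) e + inner ℂ (B v) v := by
    rw [map_add, inner_add_left, inner_add_right, inner_add_right]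
    ring
  rw [h2, h1]
  simp only [Complex.add_re, Complex.conj_re]
  ring

/-- `u` is a W-ILSS of `Az = x` iff `ran A` is `W`-nonnegative and
`A^# W (Au − x) = 0`. -/
theorem stmt0
    [TopologicalSpace.SeparableSpace H] [TopologicalSpace.SeparableSpace K]
    (JH : H →L[ℂ] H) (hJHsa : IsSelfAdjoint JH) (hJH2 : JH ∘L JH = 1)
    (JK : K →L[ℂ] K) (hJKsa : IsSelfAdjoint JK) (hJK2 : JK ∘L JK = 1)
    (A : K →L[ℂ] H) (W : H →L[ℂ] H)
    (hW : JH ∘L (ContinuousLinearMap.adjoint W) ∘L JH = W)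
    (x : H) (u : K) :
    IsWILSS JH A W x u ↔
      ((∀ z : K, 0 ≤ (inner ℂ (JH (W (A z))) (A z) : ℂ).re) ∧
        kreinAdjoint JK JH A (W (A u - x)) = 0) := by
  have hJHpt : ∀ y : H, JH (JH y) = y := fun y => by
    have := congrArg (fun T : H →L[ℂ] H => T y) hJH2
    simpa using this
  have hJKpt : ∀ y : K, JK (JK y) = y := fun y => by
    have := congrArg (fun T : K →L[ℂ] K => T y) hJK2
    simpa using this
  have hWpt : ∀ y : H, ContinuousLinearMap.adjoint W (JH y) = JH (W y) := fun y => by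
    have h0 := congrArg (fun T : H →L[ℂ] H => T y) hW
    simp only [comp_apply] at h0
    have := congrArg JH h0
    rwa [hJHpt] at this
  have hBadj : ContinuousLinearMap.adjoint (JH ∘L W) = JH ∘L W := by
    ext y
    rw [ContinuousLinearMap.adjoint_comp, hJHsa.adjoint_eq]
    simpa using hWpt y
  have hsplit : ∀ z : K, A z - x = (A u - x) + A (z - u) := fun z => by
    rw [map_sub]; abel
  have hquad : ∀ z : K,
      (inner ℂ (JH (W (A z - x))) (A z - x) : ℂ).re =
        (inner ℂ (JH (W (A u - x))) (A u - x) : ℂ).re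
        + 2 * (inner ℂ (JH (W (A u - x))) (A (z - u)) : ℂ).re
        + (inner ℂ (JH (W (A (z - u)))) (A (z - u)) : ℂ).re := by
    intro z
    have h0 := expand_re hBadj (A u - x) (A (z - u))
    simp only [comp_apply] at h0
    rw [hsplit z]
    exact h0
  constructor
  · intro h
    have key : ∀ (w : K) (t : ℂ),
        0 ≤ 2 * (t * (inner ℂ (JH (W (A u - x))) (A w) : ℂ)).re
          + ‖t‖ ^ 2 * (inner ℂ (JH (W (A w))) (A w) : ℂ).re := by
      intro w t
      have h1 := h (u + t • w)
      rw [hquad (u + t • w)] at h1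
      have e2 : (u + t • w) - u = t • w := by abel
      rw [e2] at h1
      have e3 : (inner ℂ (JH (W (A u - x))) (A (t • w)) : ℂ)
          = t * (inner ℂ (JH (W (A u - x))) (A w) : ℂ) := by
        rw [map_smul, inner_smul_right]
      have e4 : (inner ℂ (JH (W (A (t • w)))) (A (t • w)) : ℂ).re
          = ‖t‖ ^ 2 * (inner ℂ (JH (W (A w))) (A w) : ℂ).re := by
        rw [map_smul, map_smul, map_smul, inner_smul_right, inner_smul_left]
        rw [← mul_assoc, Complex.mul_conj, Complex.re_ofReal_mul]
        simp [Complex.normSq_eq_norm_sq]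
      rw [e3, e4] at h1
      linarith
    have hc : ∀ w : K, (inner ℂ (JH (W (A u - x))) (A w) : ℂ) = 0 := by
      intro w
      set c : ℂ := (inner ℂ (JH (W (A u - x))) (A w) : ℂ) with hcdef
      set b : ℝ := (inner ℂ (JH (W (A w))) (A w) : ℂ).re with hbdef
      have hre : c.re = 0 := by
        apply quad_aux (b := b)
        intro t
        have := key w (t : ℂ)
        rw [Complex.re_ofReal_mul] at this
        have e7 : ‖(t : ℂ)‖ ^ 2 = t ^ 2 := by
          rw [Complex.norm_real]; exact sq_abs t
        rw [e7] at this
        linarith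
      have him : c.im = 0 := by
        have h0 : -c.im = 0 := by
          apply quad_aux (b := b)
          intro t
          have := key w ((t : ℂ) * Complex.I)
          have e5 : (((t : ℂ) * Complex.I) * c).re = t * (-c.im) := by
            simp [Complex.mul_re, Complex.mul_im]
          have e6 : ‖(t : ℂ) * Complex.I‖ ^ 2 = t ^ 2 := by
            simp [norm_mul, sq_abs]
          rw [e5, e6] at this
          linarith
        linarith
      exact Complex.ext hre him
    have hb : ∀ w : K, 0 ≤ (inner ℂ (JH (W (A w))) (A w) : ℂ).re := by
      intro w
      have := key w 1
      rw [hc w] at this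
      simpa using this
    refine ⟨hb, ?_⟩
    have hA : ContinuousLinearMap.adjoint A (JH (W (A u - x))) = 0 := by
      apply ext_inner_right ℂ
      intro v
      rw [ContinuousLinearMap.adjoint_inner_left, inner_zero_left]
      exact hc v
    simp only [kreinAdjoint, comp_apply, hA, map_zero]
  · rintro ⟨hnn, hker⟩ z
    have hA : ContinuousLinearMap.adjoint A (JH (W (A u - x))) = 0 := by
      have h0 : JK (ContinuousLinearMap.adjoint A (JH (W (A u - x)))) = 0 := by
        simpa [kreinAdjoint] using hker
      have := congrArg JK h0
      rwa [hJKpt, map_zero] at this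
    have h0 : (inner ℂ (JH (W (A u - x))) (A (z - u)) : ℂ) = 0 := by
      rw [← ContinuousLinearMap.adjoint_inner_left, hA, inner_zero_left]
    rw [hquad z, h0]
    have := hnn (z - u)
    simp only [Complex.zero_re]
    linarith
end
end

section
/- Let A ∈ L(K,H) and let W ∈ L(H) be Krein-selfadjoint. The following statements are equivalent: (i) for every x ∈ H the equation Az = x admits a W-ILSS; (ii) ran A + ker(A^# W) = H and ran A is W-nonnegative (note ker(A^# W) = {h ∈ H : [h, Ws] = 0 for all s ∈ ran A}); (iii) there exists X ∈ L(H,K) with A^# W (A X − I) = 0 and ran A is W-nonnegative; (iv) A admits an indefinite W-inverse. -/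
open ContinuousLinearMap

noncomputable section

variable {H K : Type*} [NormedAddCommGroup H] [InnerProductSpace ℂ H] [CompleteSpace H]
  [NormedAddCommGroup K] [InnerProductSpace ℂ K] [CompleteSpace K]

section Aux

set_option linter.unusedSectionVars false

/-- The bilinear form `[Wa, b]` is Hermitian-symmetric when `W` is Krein-selfadjoint. -/
lemma aux_Tsym (JH : H →L[ℂ] H) (hJHsa : IsSelfAdjoint JH) (hJH2 : JH ∘L JH = 1)
    (W : H →L[ℂ] H) (hW : JH ∘L (ContinuousLinearMap.adjoint W) ∘L JH = W)
    (a b : H) : (inner ℂ (JH (W a)) b : ℂ) = inner ℂ a (JH (W b)) := by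
  have hJH : ∀ y : H, JH (JH y) = y := fun y => by
    have := ContinuousLinearMap.ext_iff.mp hJH2 y
    simpa using this
  have hWb : ContinuousLinearMap.adjoint W (JH b) = JH (W b) := by
    have := ContinuousLinearMap.ext_iff.mp hW b
    simp only [comp_apply] at this
    rw [← this, hJH]
  rw [← hWb]
  rw [show JH (W a) = ContinuousLinearMap.adjoint JH (W a) by rw [hJHsa.adjoint_eq]]
  rw [ContinuousLinearMap.adjoint_inner_left, ContinuousLinearMap.adjoint_inner_right]

/-- Quadratic expansion of the indefinite form. -/
lemma aux_expand (JH : H →L[ℂ] H) (hJHsa : IsSelfAdjoint JH) (hJH2 : JH ∘L JH = 1)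
    (W : H →L[ℂ] H) (hW : JH ∘L (ContinuousLinearMap.adjoint W) ∘L JH = W)
    (a b : H) : (inner ℂ (JH (W (a + b))) (a + b) : ℂ).re
      = (inner ℂ (JH (W a)) a : ℂ).re + 2 * (inner ℂ (JH (W a)) b : ℂ).re
        + (inner ℂ (JH (W b)) b : ℂ).re := by
  have h1 : (inner ℂ (JH (W (a + b))) (a + b) : ℂ)
      = inner ℂ (JH (W a)) a + inner ℂ (JH (W a)) b + inner ℂ (JH (W b)) a
        + inner ℂ (JH (W b)) b := by
    rw [map_add, map_add, inner_add_left, inner_add_right, inner_add_right]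
    ring
  have h2 : (inner ℂ (JH (W b)) a : ℂ) = starRingEnd ℂ (inner ℂ (JH (W a)) b : ℂ) := by
    rw [aux_Tsym JH hJHsa hJH2 W hW, ← inner_conj_symm]
  rw [h1, h2]
  simp only [Complex.add_re, Complex.conj_re]
  ring

/-- Real scaling of the indefinite form. -/
lemma aux_smul (JH : H →L[ℂ] H) (W : H →L[ℂ] H) (t : ℝ) (y : H) :
    (inner ℂ (JH (W ((t:ℂ) • y))) ((t:ℂ) • y) : ℂ).re
      = t^2 * (inner ℂ (JH (W y)) y : ℂ).re := by
  rw [map_smul, map_smul, inner_smul_left, inner_smul_right, Complex.conj_ofReal,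
    ← mul_assoc, ← Complex.ofReal_mul, Complex.re_ofReal_mul]
  ring

/-- A W-ILSS satisfies the normal equation `A* J_H W (Au − x) = 0`. -/
lemma aux_normal (JH : H →L[ℂ] H) (hJHsa : IsSelfAdjoint JH) (hJH2 : JH ∘L JH = 1)
    (A : K →L[ℂ] H) (W : H →L[ℂ] H)
    (hW : JH ∘L (ContinuousLinearMap.adjoint W) ∘L JH = W)
    {x : H} {u : K} (hu : IsWILSS JH A W x u) :
    ContinuousLinearMap.adjoint A (JH (W (A u - x))) = 0 := by
  set a : H := A u - x with ha
  set g : K := ContinuousLinearMap.adjoint A (JH (W a)) with hg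
  by_contra hgne
  have key : ∀ v : K, 0 ≤ 2 * (inner ℂ g v : ℂ).re + (inner ℂ (JH (W (A v))) (A v) : ℂ).re := by
    intro v
    have h1 := hu (u + v)
    have h2 : A (u + v) - x = a + A v := by rw [map_add, ha]; abel
    rw [h2, aux_expand JH hJHsa hJH2 W hW] at h1
    have h3 : (inner ℂ g v : ℂ) = inner ℂ (JH (W a)) (A v) := by
      rw [hg, ContinuousLinearMap.adjoint_inner_left]
    rw [h3]
    linarith
  set c : ℝ := (inner ℂ (JH (W (A g))) (A g) : ℂ).re with hc
  have hgpos : 0 < ‖g‖^2 := by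
    have := norm_pos_iff.mpr hgne
    positivity
  set m : ℝ := max c (‖g‖^2) with hm
  have hmpos : 0 < m := lt_of_lt_of_le hgpos (le_max_right _ _)
  set t : ℝ := ‖g‖^2 / m with ht
  have htpos : 0 < t := div_pos hgpos hmpos
  have h4 := key (-(t:ℂ) • g)
  have h5 : (inner ℂ g (-(t:ℂ) • g) : ℂ).re = -t * ‖g‖^2 := by
    rw [inner_smul_right, inner_self_eq_norm_sq_to_K, ← Complex.ofReal_neg,
      Complex.re_ofReal_mul]
    norm_num [← Complex.ofReal_pow]
  have h6 : (inner ℂ (JH (W (A (-(t:ℂ) • g)))) (A (-(t:ℂ) • g)) : ℂ).re = t^2 * c := by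
    have : (-(t:ℂ)) • g = ((-t : ℝ) : ℂ) • g := by push_cast; ring_nf
    rw [this, map_smul]
    rw [aux_smul JH W (-t) (A g)]
    ring_nf
    rw [← hc]
  rw [h5, h6] at h4
  have htc : t * c ≤ ‖g‖^2 := by
    rcases le_or_gt c 0 with h | h
    · nlinarith
    · rw [ht, div_mul_eq_mul_div]
      rw [div_le_iff₀ hmpos]
      nlinarith [le_max_left c (‖g‖^2)]
  nlinarith

/-- The normal equation plus nonnegativity of the form on `ran A` yields a W-ILSS. -/
lemma aux_wilss_of_normal (JH : H →L[ℂ] H) (hJHsa : IsSelfAdjoint JH) (hJH2 : JH ∘L JH = 1)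
    (A : K →L[ℂ] H) (W : H →L[ℂ] H)
    (hW : JH ∘L (ContinuousLinearMap.adjoint W) ∘L JH = W)
    (hpos : ∀ z : K, 0 ≤ (inner ℂ (JH (W (A z))) (A z) : ℂ).re)
    {x : H} {u : K}
    (hn : ContinuousLinearMap.adjoint A (JH (W (A u - x))) = 0) :
    IsWILSS JH A W x u := by
  intro z
  have h2 : A z - x = (A u - x) + A (z - u) := by rw [map_sub]; abel
  rw [h2, aux_expand JH hJHsa hJH2 W hW]
  have h3 : (inner ℂ (JH (W (A u - x))) (A (z - u)) : ℂ) = 0 := by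
    rw [← ContinuousLinearMap.adjoint_inner_left A, hn, inner_zero_left]
  rw [h3]
  have := hpos (z - u)
  simp only [Complex.zero_re, mul_zero, add_zero]
  linarith

/-- Universal solvability of the W-ILSS problem forces `W`-nonnegativity of `ran A`. -/
lemma aux_pos (JH : H →L[ℂ] H) (hJHsa : IsSelfAdjoint JH) (hJH2 : JH ∘L JH = 1)
    (A : K →L[ℂ] H) (W : H →L[ℂ] H)
    (hW : JH ∘L (ContinuousLinearMap.adjoint W) ∘L JH = W)
    (hex : ∀ x : H, ∃ u : K, IsWILSS JH A W x u) :
    ∀ z : K, 0 ≤ (inner ℂ (JH (W (A z))) (A z) : ℂ).re := by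
  intro s
  by_contra hneg
  push_neg at hneg
  set c : ℝ := (inner ℂ (JH (W (A s))) (A s) : ℂ).re with hc
  obtain ⟨u, hu⟩ := hex 0
  set q : ℝ := (inner ℂ (JH (W (A u - 0))) (A u - 0) : ℂ).re with hq
  set t : ℝ := Real.sqrt (max (q / c) 0) + 1 with htdef
  have ht1 : q / c < t^2 := by
    have h1 : 0 ≤ Real.sqrt (max (q / c) 0) := Real.sqrt_nonneg _
    have h2 : Real.sqrt (max (q / c) 0) ^ 2 = max (q / c) 0 :=
      Real.sq_sqrt (le_max_right _ _)
    have h3 : q / c ≤ max (q / c) 0 := le_max_left _ _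
    nlinarith
  have h4 := hu ((t:ℂ) • s)
  have h5 : A ((t:ℂ) • s) - 0 = (t:ℂ) • A s := by rw [map_smul]; abel
  rw [h5] at h4
  have h6 : (inner ℂ (JH (W ((t:ℂ) • A s))) ((t:ℂ) • A s) : ℂ).re = t^2 * c :=
    aux_smul JH W t (A s)
  rw [h6, ← hq] at h4
  have : t^2 * c < q := by
    rw [← div_lt_iff_of_neg hneg] at *
    linarith [ht1]
  linarith

/-- Douglas-type lemma: pointwise solvability of `S z = N x` yields a bounded solution
operator, via orthogonal projection onto `(ker S)ᗮ` and the closed graph theorem. -/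
lemma aux_douglas (S : K →L[ℂ] K) (N : H →L[ℂ] K)
    (hran : ∀ x : H, ∃ z : K, S z = N x) :
    ∃ X : H →L[ℂ] K, ∀ x : H, S (X x) = N x := by
  set V : Submodule ℂ K := (LinearMap.ker (S : K →ₗ[ℂ] K))ᗮ with hV
  haveI : CompleteSpace (LinearMap.ker (S : K →ₗ[ℂ] K)) :=
    (ContinuousLinearMap.isClosed_ker S).completeSpace_coe
  have horth : Vᗮ = LinearMap.ker (S : K →ₗ[ℂ] K) := Submodule.orthogonal_orthogonal _
  choose sol hsol using hran
  set φ : H → K := fun x => (V.orthogonalProjectionOnto (sol x) : K) with hφ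
  have hφV : ∀ x, φ x ∈ V := fun x => (V.orthogonalProjectionOnto (sol x)).2
  have hSφ : ∀ x, S (φ x) = N x := by
    intro x
    have hmem : sol x - φ x ∈ Vᗮ := V.sub_starProjection_mem_orthogonal (sol x)
    rw [horth, LinearMap.mem_ker, ContinuousLinearMap.coe_coe] at hmem
    have : S (sol x) = S (φ x) + S (sol x - φ x) := by rw [map_sub]; abel
    rw [hmem, add_zero] at this
    rw [← this, hsol]
  have huniq : ∀ (x : H) (w : K), w ∈ V → S w = N x → w = φ x := by
    intro x w hw hSw
    have h1 : w - φ x ∈ V := V.sub_mem hw (hφV x)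
    have h2 : w - φ x ∈ LinearMap.ker (S : K →ₗ[ℂ] K) := by
      rw [LinearMap.mem_ker, ContinuousLinearMap.coe_coe, map_sub, hSw, hSφ, sub_self]
    have h3 : (inner ℂ (w - φ x) (w - φ x) : ℂ) = 0 := by
      rw [hV] at h1
      exact (Submodule.mem_orthogonal _ _).mp h1 _ h2
    rw [inner_self_eq_zero] at h3
    rw [sub_eq_zero] at h3
    exact h3
  set L : H →ₗ[ℂ] K :=
    { toFun := φ
      map_add' := fun x y => by
        refine (huniq (x + y) (φ x + φ y) (V.add_mem (hφV x) (hφV y)) ?_).symm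
        rw [map_add, hSφ, hSφ, map_add]
      map_smul' := fun c x => by
        refine (huniq (c • x) (c • φ x) (V.smul_mem c (hφV x)) ?_).symm
        rw [map_smul, hSφ, map_smul] } with hL
  have hgraph : (L.graph : Set (H × K))
      = {p : H × K | S p.2 - N p.1 = 0} ∩ {p : H × K | p.2 ∈ V} := by
    ext p
    simp only [SetLike.mem_coe, LinearMap.mem_graph_iff, Set.mem_inter_iff, Set.mem_setOf_eq]
    constructor
    · rintro h
      rw [h]
      refine ⟨?_, hφV _⟩
      show S (φ p.1) - N p.1 = 0
      rw [hSφ, sub_self]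
    · rintro ⟨h1, h2⟩
      show p.2 = φ p.1
      exact huniq p.1 p.2 h2 (sub_eq_zero.mp h1)
  have hclosed : IsClosed (L.graph : Set (H × K)) := by
    rw [hgraph]
    refine IsClosed.inter ?_ ?_
    · have : Continuous fun p : H × K => S p.2 - N p.1 :=
        (S.continuous.comp continuous_snd).sub (N.continuous.comp continuous_fst)
      exact isClosed_eq this continuous_const
    · exact IsClosed.preimage continuous_snd (Submodule.isClosed_orthogonal _)
  refine ⟨ContinuousLinearMap.ofIsClosedGraph hclosed, fun x => ?_⟩
  have hx : (ContinuousLinearMap.ofIsClosedGraph hclosed) x = φ x :=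
    congrFun (ContinuousLinearMap.coeFn_ofIsClosedGraph hclosed) x
  rw [hx, hSφ]

end Aux

/-- equivalence of (i) solvability of the indefinite weighted least squares
problem for every `x`, (ii) `ran A + ker(A^# W) = H` together with `W`-nonnegativity of
`ran A`, (iii) solvability of the normal equation `A^# W (AX − I) = 0` together with
`W`-nonnegativity of `ran A`, and (iv) existence of an indefinite `W`-inverse of `A`. -/
theorem stmt1
    [TopologicalSpace.SeparableSpace H] [TopologicalSpace.SeparableSpace K]
    (JH : H →L[ℂ] H) (hJHsa : IsSelfAdjoint JH) (hJH2 : JH ∘L JH = 1)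
    (JK : K →L[ℂ] K) (hJKsa : IsSelfAdjoint JK) (hJK2 : JK ∘L JK = 1)
    (A : K →L[ℂ] H) (W : H →L[ℂ] H)
    (hW : JH ∘L (ContinuousLinearMap.adjoint W) ∘L JH = W) :
    List.TFAE
      [ -- (i) `Az = x` admits a W-ILSS for every `x ∈ H`
        ∀ x : H, ∃ u : K, IsWILSS JH A W x u,
        -- (ii) `ran A + ker(A^# W) = H` and `ran A` is `W`-nonnegative
        (∀ x : H, ∃ (z : K) (h : H),
            kreinAdjoint JK JH A (W h) = 0 ∧ x = A z + h) ∧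
          (∀ z : K, 0 ≤ (inner ℂ (JH (W (A z))) (A z) : ℂ).re),
        -- (iii) the normal equation `A^# W (AX − I) = 0` admits a solution and
        -- `ran A` is `W`-nonnegative
        (∃ X : H →L[ℂ] K,
            (kreinAdjoint JK JH A) ∘L (W ∘L (A ∘L X - 1)) = 0) ∧
          (∀ z : K, 0 ≤ (inner ℂ (JH (W (A z))) (A z) : ℂ).re),
        -- (iv) `A` admits an indefinite `W`-inverse
        ∃ G : H →L[ℂ] K, ∀ x : H, IsWILSS JH A W x (G x) ] := by
  have hJK : ∀ y : K, JK (JK y) = y := fun y => by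
    have := ContinuousLinearMap.ext_iff.mp hJK2 y
    simpa using this
  have hJKinj : ∀ y : K, JK y = 0 → y = 0 := fun y hy => by
    rw [← hJK y, hy, map_zero]
  have hkrein : ∀ y : H, kreinAdjoint JK JH A y
      = JK (ContinuousLinearMap.adjoint A (JH y)) := fun y => rfl
  tfae_have 1 → 2
  | h1 => by
    refine ⟨fun x => ?_, aux_pos JH hJHsa hJH2 A W hW h1⟩
    obtain ⟨u, hu⟩ := h1 x
    refine ⟨u, x - A u, ?_, by abel⟩
    have hn := aux_normal JH hJHsa hJH2 A W hW hu
    rw [hkrein]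
    have : (x - A u) = -(A u - x) := by abel
    rw [this, map_neg, map_neg, map_neg, hn, neg_zero, map_zero]
  tfae_have 2 → 3
  | ⟨h2a, hpos⟩ => by
    refine ⟨?_, hpos⟩
    set N : H →L[ℂ] K := (ContinuousLinearMap.adjoint A) ∘L (JH ∘L W) with hN
    have hran : ∀ x : H, ∃ z : K, (N ∘L A) z = N x := by
      intro x
      obtain ⟨z, h, hh, hx⟩ := h2a x
      have hNh : N h = 0 := by
        rw [hkrein] at hh
        exact hJKinj _ hh
      refine ⟨z, ?_⟩
      have hx2 : N x = N (A z) + N h := by rw [hx, map_add]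
      rw [ContinuousLinearMap.comp_apply, hx2, hNh, add_zero]
    obtain ⟨X, hX⟩ := aux_douglas (N ∘L A) N hran
    refine ⟨X, ?_⟩
    ext x
    have h0 : N (A (X x) - x) = 0 := by
      rw [map_sub]
      have := hX x
      rw [ContinuousLinearMap.comp_apply] at this
      rw [this, sub_self]
    simp only [comp_apply, sub_apply, one_apply, zero_apply, hkrein]
    rw [show (ContinuousLinearMap.adjoint A) (JH (W (A (X x) - (1 : H →L[ℂ] H) x)))
        = N (A (X x) - x) from rfl, h0, map_zero]
  tfae_have 3 → 4
  | ⟨⟨X, hX⟩, hpos⟩ => by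
    refine ⟨X, fun x => ?_⟩
    apply aux_wilss_of_normal JH hJHsa hJH2 A W hW hpos
    have := ContinuousLinearMap.ext_iff.mp hX x
    simp only [comp_apply, sub_apply, one_apply, zero_apply, hkrein] at this
    exact hJKinj _ this
  tfae_have 4 → 1
  | ⟨G, hG⟩ => fun x => ⟨G x, hG x⟩
  tfae_finish
end
end

section
/- Let A ∈ L(K,H) and let W ∈ L(H) be Krein-selfadjoint. If A admits an indefinite W-inverse, then H = cl(ran A) + ker(A^# W), where cl(ran A) is the closure of ran A; that is, W is cl(ran A)-complementable (note ker(A^# W) = {h ∈ H : [h, Ws] = 0 for all s ∈ cl(ran A)}, the orthogonal companion of W(cl(ran A))). -/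
open ContinuousLinearMap

noncomputable section

variable {H K : Type*} [NormedAddCommGroup H] [InnerProductSpace ℂ H] [CompleteSpace H]
  [NormedAddCommGroup K] [InnerProductSpace ℂ K] [CompleteSpace K]

lemma aux_stmt3 (L Q : ℝ) (h : ∀ t : ℝ, 0 ≤ t * L + t^2 * Q) : L = 0 := by
  by_contra hL
  have h1 := h (-L/(2*(|Q|+1)))
  have hQ2 : Q ≤ |Q| := le_abs_self Q
  have hL2 : 0 < L^2 := by positivity
  have hd : (0:ℝ) < 2*(|Q|+1) := by positivity
  have key : 0 ≤ (-L/(2*(|Q|+1)) * L + (-L/(2*(|Q|+1)))^2 * Q) * (2*(|Q|+1))^2 := by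
    nlinarith [sq_nonneg (2*(|Q|+1))]
  rw [div_pow] at key
  have e : (-L/(2*(|Q|+1)) * L + (-L)^2/(2*(|Q|+1))^2 * Q) * (2*(|Q|+1))^2
      = -L^2*(2*(|Q|+1)) + L^2*Q := by field_simp
  rw [e] at key
  nlinarith

/-- if `A` admits an indefinite `W`-inverse, then
`H = cl(ran A) + ker(A^# W)`, i.e. `W` is `cl(ran A)`-complementable. -/
theorem stmt3
    [TopologicalSpace.SeparableSpace H] [TopologicalSpace.SeparableSpace K]
    (JH : H →L[ℂ] H) (hJHsa : IsSelfAdjoint JH) (hJH2 : JH ∘L JH = 1)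
    (JK : K →L[ℂ] K) (hJKsa : IsSelfAdjoint JK) (hJK2 : JK ∘L JK = 1)
    (A : K →L[ℂ] H) (W : H →L[ℂ] H)
    (hW : JH ∘L (ContinuousLinearMap.adjoint W) ∘L JH = W)
    (hG : ∃ G : H →L[ℂ] K, ∀ x : H, IsWILSS JH A W x (G x)) :
    ∀ x : H, ∃ m ∈ closure (Set.range A), ∃ h : H,
      kreinAdjoint JK JH A (W h) = 0 ∧ x = m + h := by
  obtain ⟨G, hG⟩ := hG
  intro x
  have hJHpt : ∀ a : H, JH (JH a) = a := by
    intro a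
    have := congrArg (fun T : H →L[ℂ] H => T a) hJH2
    simpa using this
  have hWpt : ∀ a : H, adjoint W (JH a) = JH (W a) := by
    intro a
    have := congrArg (fun T : H →L[ℂ] H => T a) hW
    simp only [comp_apply] at this
    rw [← this, hJHpt]
  have hswap : ∀ a b : H, (inner ℂ (JH (W a)) b : ℂ) = inner ℂ a (JH (W b)) := by
    intro a b
    have h1 := adjoint_inner_left JH b (W a)
    rw [hJHsa.adjoint_eq] at h1
    rw [h1, ← hWpt, ← adjoint_inner_right]
  set v := A (G x) - x with hv
  have hα : ∀ z : K, (inner ℂ (JH (W v)) (A z) : ℂ) = 0 := by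
    intro z
    set w := A z with hw
    set α : ℂ := inner ℂ (JH (W v)) w with hαdef
    set Q : ℝ := (inner ℂ (JH (W w)) w : ℂ).re with hQ
    have hkey : ∀ c : ℂ, 0 ≤ 2 * (c * α).re + ‖c‖^2 * Q := by
      intro c
      have h1 := hG x (G x + c • z)
      have e1 : A (G x + c • z) - x = v + c • w := by
        simp only [map_add, map_smul, hv, hw]; abel
      rw [e1] at h1
      have e2 : (inner ℂ (JH (W (v + c • w))) (v + c • w) : ℂ)
          = inner ℂ (JH (W v)) v + c * α + (starRingEnd ℂ) (c * α)
            + (starRingEnd ℂ) c * c * (inner ℂ (JH (W w)) w : ℂ) := by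
        simp only [map_add, map_smul, inner_add_left, inner_add_right, inner_smul_left,
          inner_smul_right]
        have e3 : (inner ℂ (JH (W w)) v : ℂ) = (starRingEnd ℂ) α := by
          rw [hswap w v, ← inner_conj_symm, hαdef]
        rw [e3, map_mul]
        ring
      rw [e2] at h1
      simp only [Complex.add_re] at h1
      have e4 : ((starRingEnd ℂ) c * c * (inner ℂ (JH (W w)) w : ℂ)).re = ‖c‖^2 * Q := by
        rw [Complex.conj_mul', ← Complex.ofReal_pow, Complex.re_ofReal_mul, hQ]
      have e5 : ((starRingEnd ℂ) (c * α)).re = (c * α).re := Complex.conj_re _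
      rw [e4, e5] at h1
      linarith
    have hre : α.re = 0 := by
      have h2 : ∀ t : ℝ, 0 ≤ t * (2 * α.re) + t^2 * Q := by
        intro t
        have h := hkey (t : ℂ)
        have h3 : ((t:ℂ) * α).re = t * α.re := by simp [Complex.mul_re]
        have h4 : ‖(t:ℂ)‖^2 = t^2 := by
          rw [Complex.norm_real]; exact sq_abs t
        rw [h3, h4] at h
        linarith
      have := aux_stmt3 _ Q h2
      linarith
    have him : α.im = 0 := by
      have h2 : ∀ t : ℝ, 0 ≤ t * (2 * α.im) + t^2 * Q := by
        intro t
        have h := hkey ((-t : ℝ) * Complex.I)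
        have h3 : (((-t : ℝ) : ℂ) * Complex.I * α).re = t * α.im := by
          simp [Complex.mul_re, Complex.mul_im]
        have h4 : ‖((-t : ℝ) : ℂ) * Complex.I‖^2 = t^2 := by
          rw [norm_mul, Complex.norm_I, mul_one, Complex.norm_real]
          rw [Real.norm_eq_abs, sq_abs]; ring
        rw [h3, h4] at h
        linarith
      have := aux_stmt3 _ Q h2
      linarith
    exact Complex.ext hre him
  refine ⟨A (G x), subset_closure ⟨G x, rfl⟩, x - A (G x), ?_, by abel⟩
  have h0 : adjoint A (JH (W v)) = 0 := by
    apply ext_inner_right ℂ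
    intro z
    rw [adjoint_inner_left, hα z, inner_zero_left]
  have hneg : x - A (G x) = -v := by rw [hv]; abel
  rw [hneg]
  simp only [kreinAdjoint, comp_apply, map_neg, h0, neg_zero, map_zero]
end
end

section
/- Let A ∈ L(K,H) and suppose A admits an indefinite I-inverse, i.e., an indefinite W-inverse with W = I the identity on H. Then the closure of ran A is a regular subspace of the Krein space H: H = cl(ran A) + ker A^# and cl(ran A) ∩ ker A^# = {0} (note ker A^# = {h ∈ H : [h, Az] = 0 for all z ∈ K}, the orthogonal companion of ran A). -/
open ContinuousLinearMap

noncomputable section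

variable {H K : Type*} [NormedAddCommGroup H] [InnerProductSpace ℂ H] [CompleteSpace H]
  [NormedAddCommGroup K] [InnerProductSpace ℂ K] [CompleteSpace K]

lemma wilss_orth (JH : H →L[ℂ] H) (hJHsa : IsSelfAdjoint JH)
    (A : K →L[ℂ] H) (x : H) (u : K)
    (hu : IsWILSS JH A (1 : H →L[ℂ] H) x u) (w : K) :
    inner ℂ (JH (A u - x)) (A w) = (0 : ℂ) := by
  have hJH' : ContinuousLinearMap.adjoint JH = JH := hJHsa
  set r : H := A u - x with hr
  set c : ℂ := inner ℂ (JH r) (A w) with hcdef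
  set a : ℝ := (inner ℂ (JH (A w)) (A w) : ℂ).re with hadef
  have hsym : (inner ℂ (JH (A w)) r : ℂ) = (starRingEnd ℂ) c := by
    rw [hcdef, ← inner_conj_symm, ← hJH', adjoint_inner_right, hJH']
  have hineq : ∀ t : ℂ, 0 ≤ 2 * (t * c).re + Complex.normSq t * a := by
    intro t
    have h := hu (u + t • w)
    have hz : A (u + t • w) - x = r + t • A w := by
      rw [map_add, map_smul, hr]; abel
    rw [one_def] at h
    simp only [ContinuousLinearMap.id_apply, hz] at h
    have hexp : (inner ℂ (JH (r + t • A w)) (r + t • A w) : ℂ)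
        = inner ℂ (JH r) r + t * c + (starRingEnd ℂ) (t * c)
          + (Complex.normSq t : ℂ) * inner ℂ (JH (A w)) (A w) := by
      rw [map_add, map_smul, inner_add_left, inner_add_right, inner_add_right,
        inner_smul_left, inner_smul_right, inner_smul_right, inner_smul_left, hsym,
        Complex.normSq_eq_conj_mul_self, map_mul]
      push_cast
      ring
    rw [← hr, hexp] at h
    simp only [Complex.add_re, Complex.conj_re, Complex.re_ofReal_mul] at h
    rw [← hadef] at h
    linarith
  by_contra hc
  have hnc : 0 < Complex.normSq c := by
    simpa [Complex.normSq_pos] using hc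
  set s : ℝ := (|a| + 1)⁻¹ with hs
  have hspos : 0 < s := by positivity
  have hkey := hineq (-(s : ℂ) * (starRingEnd ℂ) c)
  have h1 : ((-(s : ℂ) * (starRingEnd ℂ) c) * c).re = -s * Complex.normSq c := by
    rw [mul_assoc, ← Complex.normSq_eq_conj_mul_self]
    simp [Complex.re_ofReal_mul]
  have h2 : Complex.normSq (-(s : ℂ) * (starRingEnd ℂ) c) = s ^ 2 * Complex.normSq c := by
    rw [Complex.normSq_mul, Complex.normSq_conj, Complex.normSq_neg, Complex.normSq_ofReal]
    ring
  rw [h1, h2] at hkey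
  have hsa : s * (|a| + 1) = 1 := by
    rw [hs]; field_simp
  have hale : a ≤ |a| := le_abs_self a
  set N : ℝ := Complex.normSq c with hN
  have h3 : s * |a| + s = 1 := by linear_combination hsa
  have e4 : s ^ 2 * N * a ≤ s ^ 2 * N * |a| :=
    mul_le_mul_of_nonneg_left hale (by positivity)
  have e5 : s ^ 2 * N * |a| = s * N * (s * |a|) := by ring
  have e6 : s * |a| ≤ 1 := by linarith
  have e7 : s * N * (s * |a|) ≤ s * N * 1 :=
    mul_le_mul_of_nonneg_left e6 (by positivity)
  have e8 : 0 < s * N := mul_pos hspos hnc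
  nlinarith

/-- if `A` admits an indefinite `I`-inverse, then `cl(ran A)` is a regular
subspace of the Krein space `H`: `H = cl(ran A) + ker A^#` and
`cl(ran A) ∩ ker A^# = {0}`. -/
theorem stmt4
    [TopologicalSpace.SeparableSpace H] [TopologicalSpace.SeparableSpace K]
    (JH : H →L[ℂ] H) (hJHsa : IsSelfAdjoint JH) (hJH2 : JH ∘L JH = 1)
    (JK : K →L[ℂ] K) (hJKsa : IsSelfAdjoint JK) (hJK2 : JK ∘L JK = 1)
    (A : K →L[ℂ] H)
    (hG : ∃ G : H →L[ℂ] K, ∀ x : H, IsWILSS JH A (1 : H →L[ℂ] H) x (G x)) :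
    (∀ x : H, ∃ m ∈ closure (Set.range A), ∃ h : H,
        kreinAdjoint JK JH A h = 0 ∧ x = m + h) ∧
      (∀ x ∈ closure (Set.range A), kreinAdjoint JK JH A x = 0 → x = 0) := by
  obtain ⟨G, hGspec⟩ := hG
  have hJK2' : ∀ v : K, JK (JK v) = v := fun v => by
    have := ContinuousLinearMap.ext_iff.mp hJK2 v
    simpa using this
  have hJH2' : ∀ v : H, JH (JH v) = v := fun v => by
    have := ContinuousLinearMap.ext_iff.mp hJH2 v
    simpa using this
  -- from kreinAdjoint ... h = 0 deduce orthogonality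
  have kerOrth : ∀ h : H, kreinAdjoint JK JH A h = 0 →
      ∀ v ∈ closure (Set.range A), inner ℂ (JH h) v = (0 : ℂ) := by
    intro h hker
    have h0 : ContinuousLinearMap.adjoint A (JH h) = 0 := by
      have h1 : JK (ContinuousLinearMap.adjoint A (JH h)) = 0 := hker
      have := congrArg JK h1
      rwa [hJK2' _, map_zero] at this
    have hran : ∀ w : K, inner ℂ (JH h) (A w) = (0 : ℂ) := by
      intro w
      rw [← adjoint_inner_left, h0, inner_zero_left]
    intro v hv
    have hclosed : IsClosed {v : H | inner ℂ (JH h) v = (0 : ℂ)} := by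
      have : {v : H | inner ℂ (JH h) v = (0 : ℂ)} = (innerSL ℂ (JH h)) ⁻¹' {0} := rfl
      rw [this]
      exact IsClosed.preimage (innerSL ℂ (JH h)).continuous isClosed_singleton
    have hsub : Set.range A ⊆ {v : H | inner ℂ (JH h) v = (0 : ℂ)} := by
      rintro _ ⟨w, rfl⟩; exact hran w
    exact closure_minimal hsub hclosed hv
  have part1 : ∀ x : H, ∃ m ∈ closure (Set.range A), ∃ h : H,
      kreinAdjoint JK JH A h = 0 ∧ x = m + h := by
    intro x
    have horth : ∀ w, inner ℂ (JH (A (G x) - x)) (A w) = (0 : ℂ) :=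
      wilss_orth JH hJHsa A x (G x) (hGspec x)
    refine ⟨A (G x), subset_closure ⟨G x, rfl⟩, x - A (G x), ?_, by abel⟩
    have horth' : ∀ w, inner ℂ (JH (x - A (G x))) (A w) = (0 : ℂ) := by
      intro w
      have : x - A (G x) = -(A (G x) - x) := by abel
      rw [this, map_neg, inner_neg_left, horth w, neg_zero]
    have hadj : ContinuousLinearMap.adjoint A (JH (x - A (G x))) = 0 := by
      rw [← inner_self_eq_zero (𝕜 := ℂ)]
      rw [adjoint_inner_left]
      exact horth' _
    show JK (ContinuousLinearMap.adjoint A (JH (x - A (G x)))) = 0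
    rw [hadj, map_zero]
  refine ⟨part1, ?_⟩
  intro x hx hker
  obtain ⟨m, hm, h, hhker, hdec⟩ := part1 (JH x)
  have hx2 : x = JH m + JH h := by
    have := congrArg JH hdec
    rwa [hJH2' x, map_add] at this
  have hJH' : ContinuousLinearMap.adjoint JH = JH := hJHsa
  have e1 : (inner ℂ x (JH m) : ℂ) = 0 := by
    have : (inner ℂ x (JH m) : ℂ) = inner ℂ (JH x) m := by
      conv_lhs => rw [← hJH']
      rw [adjoint_inner_right]
    rw [this]
    exact kerOrth x hker m hm
  have e2 : (inner ℂ x (JH h) : ℂ) = 0 := by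
    rw [← inner_conj_symm]
    have : (inner ℂ (JH h) x : ℂ) = 0 := kerOrth h hhker x hx
    rw [this, map_zero]
  have : (inner ℂ x x : ℂ) = 0 := by
    nth_rewrite 2 [hx2]
    rw [inner_add_right, e1, e2, add_zero]
  exact inner_self_eq_zero.mp this
end
end

section
/- Let A ∈ L(K,H) and let W ∈ L(H) be Krein-selfadjoint. The following are equivalent: (a) there exists X₀ ∈ L(H,K) such that (AX−I)^# W (AX−I) − (AX₀−I)^# W (AX₀−I) is Krein-positive for every X ∈ L(H,K); (b) ran A is W-nonnegative and ran A + ker(A^# W) = H. -/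
open ContinuousLinearMap

noncomputable section

variable {H K : Type*} [NormedAddCommGroup H] [InnerProductSpace ℂ H] [CompleteSpace H]
  [NormedAddCommGroup K] [InnerProductSpace ℂ K] [CompleteSpace K]

/-- An operator `S ∈ L(H)` is Krein-positive: `S^# = S` and `[Sx,x] ≥ 0` for all `x`. -/
def KreinPositive (JH : H →L[ℂ] H) (S : H →L[ℂ] H) : Prop :=
  kreinAdjoint JH JH S = S ∧ ∀ x : H, 0 ≤ (inner ℂ (JH (S x)) x : ℂ).re

/-- The error operator `(AX − I)^# W (AX − I)`. -/
def errOp (JH : H →L[ℂ] H) (A : K →L[ℂ] H) (W : H →L[ℂ] H) (X : H →L[ℂ] K) :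
    H →L[ℂ] H :=
  kreinAdjoint JH JH (A ∘L X - 1) ∘L (W ∘L (A ∘L X - 1))

/-- Auxiliary: a coercivity-style scalar fact. -/
lemma aux_quad1 (q a : ℝ) (h : ∀ t : ℝ, 0 < t → 0 ≤ 2*(t*a) + t^2*q) : 0 ≤ q := by
  by_contra hq
  push_neg at hq
  have hq' : (0:ℝ) < -q := by linarith
  set t : ℝ := (2*|a| + 1) / (-q) with ht
  have htpos : 0 < t := div_pos (by positivity) hq'
  have h1 := h t htpos
  have h2 : t * (-q) = 2*|a| + 1 := div_mul_cancel₀ _ (ne_of_gt hq')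
  have h3 : t^2 * q = -(t*(2*|a|+1)) := by rw [← h2]; ring
  rw [h3] at h1
  nlinarith [mul_le_mul_of_nonneg_left (le_abs_self a) htpos.le, htpos]

/-- Auxiliary: vanishing of the linear coefficient of a nonnegative quadratic. -/
lemma aux_quad2 (q : ℝ) (hq : 0 ≤ q) (α : ℂ)
    (h : ∀ c : ℂ, 0 ≤ 2*(c*α).re + Complex.normSq c * q) : α = 0 := by
  by_contra hα
  have hs : 0 < Complex.normSq α := Complex.normSq_pos.mpr hα
  set t : ℝ := 1/(q+1) with ht
  have htpos : 0 < t := by positivity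
  have h1 := h (-(t:ℂ) * (starRingEnd ℂ) α)
  have hre : ((-(t:ℂ) * (starRingEnd ℂ) α) * α).re = -t * Complex.normSq α := by
    have e : (-(t:ℂ) * (starRingEnd ℂ) α) * α = -(t:ℂ) * (Complex.normSq α : ℂ) := by
      rw [mul_assoc, Complex.normSq_eq_conj_mul_self]
    rw [e]
    simp
  have hns : Complex.normSq (-(t:ℂ) * (starRingEnd ℂ) α) = t^2 * Complex.normSq α := by
    simp only [Complex.normSq_mul, Complex.normSq_conj, Complex.normSq_neg,
      Complex.normSq_ofReal]
    ring
  rw [hre, hns] at h1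
  have htq : t * (q+1) = 1 := by
    rw [ht]; field_simp
  have h5 : t * q = 1 - t := by ring_nf at htq ⊢; linarith
  have h6 : t^2 * Complex.normSq α * q = t * Complex.normSq α * (1 - t) := by
    rw [← h5]; ring
  rw [h6] at h1
  nlinarith [mul_pos htpos hs, mul_pos (mul_pos htpos htpos) hs]

/-- Auxiliary: rank-one operators hit prescribed values. -/
lemma aux_rankone (x : H) (hx : x ≠ 0) (k : K) (c : ℂ) :
    ∃ D : H →L[ℂ] K, D x = c • k := by
  refine ⟨((c * (inner ℂ x x : ℂ)⁻¹) • (innerSL ℂ x)).smulRight k, ?_⟩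
  have hb : (inner ℂ x x : ℂ) ≠ 0 := fun h0 => hx (inner_self_eq_zero.mp h0)
  simp only [ContinuousLinearMap.smulRight_apply, ContinuousLinearMap.smul_apply,
    innerSL_apply_apply, smul_eq_mul]
  rw [mul_assoc, inv_mul_cancel₀ hb, mul_one]

/-- Auxiliary: construction of the solution of the normal equations from the
range decomposition condition. -/
lemma aux_construct (JK : K →L[ℂ] K) (JH : H →L[ℂ] H) (A : K →L[ℂ] H) (W : H →L[ℂ] H)
    (hb2 : ∀ x : H, ∃ (z : K) (h : H),
          kreinAdjoint JK JH A (W h) = 0 ∧ x = A z + h) :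
    ∃ X₀ : H →L[ℂ] K, ∀ x : H, kreinAdjoint JK JH A (W (A (X₀ x) - x)) = 0 := by
  set C : H →L[ℂ] K := (kreinAdjoint JK JH A) ∘L W with hC
  set N : Submodule ℂ H := LinearMap.ker (C : H →ₗ[ℂ] K) with hN
  have hNclosed : IsClosed (N : Set H) := ContinuousLinearMap.isClosed_ker C
  haveI : CompleteSpace N := hNclosed.completeSpace_coe
  set P : H →L[ℂ] ↥Nᗮ := Submodule.orthogonalProjectionOnto Nᗮ with hP
  set B : K →L[ℂ] ↥Nᗮ := P ∘L A with hBdef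
  have hBsurj : ∀ y : ↥Nᗮ, ∃ z : K, B z = y := by
    intro y
    obtain ⟨z, h, hh, hx⟩ := hb2 (y : H)
    have hhN : h ∈ N := by
      show C h = 0
      simpa [hC, comp_apply] using hh
    refine ⟨z, ?_⟩
    have hAz : A z = (y : H) - h := by rw [hx]; abel
    have : B z = P ((y : H)) - P h := by
      rw [hBdef]; simp only [comp_apply, hAz, map_sub]
    rw [this, Submodule.orthogonalProjectionOnto_mem_subspace_eq_self,
      Submodule.orthogonalProjectionOnto_eq_zero_iff.mpr (N.le_orthogonal_orthogonal hhN), sub_zero]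
  set M : Submodule ℂ K := (LinearMap.ker (B : K →ₗ[ℂ] ↥Nᗮ))ᗮ with hM
  haveI : CompleteSpace M := (LinearMap.ker (B : K →ₗ[ℂ] ↥Nᗮ)).isClosed_orthogonal.completeSpace_coe
  haveI : CompleteSpace (LinearMap.ker (B : K →ₗ[ℂ] ↥Nᗮ)) := (ContinuousLinearMap.isClosed_ker B).completeSpace_coe
  set B' : ↥M →L[ℂ] ↥Nᗮ := B ∘L M.subtypeL with hB'
  have hinj : LinearMap.ker (B' : ↥M →ₗ[ℂ] ↥Nᗮ) = ⊥ := by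
    rw [Submodule.eq_bot_iff]
    rintro ⟨m, hm⟩ hm0
    have hmker : m ∈ LinearMap.ker (B : K →ₗ[ℂ] ↥Nᗮ) := by
      simpa [hB', LinearMap.mem_ker, comp_apply] using hm0
    have : m = 0 := by
      have := (Submodule.mem_orthogonal _ m).mp hm _ hmker
      simpa [inner_self_eq_zero] using this
    exact Subtype.ext this
  have hsurj : LinearMap.range (B' : ↥M →ₗ[ℂ] ↥Nᗮ) = ⊤ := by
    rw [Submodule.eq_top_iff']
    intro y
    obtain ⟨z, hz⟩ := hBsurj y
    obtain ⟨z₀, hz₀, z₁, hz₁, hsum⟩ :=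
      Submodule.exists_add_mem_mem_orthogonal (K := LinearMap.ker (B : K →ₗ[ℂ] ↥Nᗮ)) z
    refine ⟨⟨z₁, hz₁⟩, ?_⟩
    have : B z = B z₁ := by
      rw [hsum, map_add, (by exact LinearMap.mem_ker.mp hz₀ : B z₀ = 0), zero_add]
    simpa [hB', comp_apply] using this ▸ hz
  let e := ContinuousLinearEquiv.ofBijective B' hinj hsurj
  set X₀ : H →L[ℂ] K := M.subtypeL ∘L ((e.symm : ↥Nᗮ →L[ℂ] ↥M) ∘L P) with hX₀
  refine ⟨X₀, fun x => ?_⟩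
  have hfix : B (X₀ x) = P x := by
    have : B' (e.symm (P x)) = P x := e.apply_symm_apply (P x)
    simpa [hX₀, hB', comp_apply] using this
  have hmem : A (X₀ x) - x ∈ N := by
    have h0 : P (A (X₀ x) - x) = 0 := by
      have : P (A (X₀ x)) = P x := hfix
      rw [map_sub, this, sub_self]
    have := Submodule.orthogonalProjectionOnto_eq_zero_iff.mp h0
    rwa [Submodule.orthogonal_orthogonal] at this
  simpa [hC, comp_apply] using (LinearMap.mem_ker.mp hmem)

/-- there is a Krein-order minimizer `X₀` of `(AX−I)^# W (AX−I)` iff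
`ran A` is `W`-nonnegative and `ran A + ker(A^# W) = H`. -/
theorem stmt5
    [TopologicalSpace.SeparableSpace H] [TopologicalSpace.SeparableSpace K]
    (JH : H →L[ℂ] H) (hJHsa : IsSelfAdjoint JH) (hJH2 : JH ∘L JH = 1)
    (JK : K →L[ℂ] K) (hJKsa : IsSelfAdjoint JK) (hJK2 : JK ∘L JK = 1)
    (A : K →L[ℂ] H) (W : H →L[ℂ] H)
    (hW : JH ∘L (ContinuousLinearMap.adjoint W) ∘L JH = W) :
    (∃ X₀ : H →L[ℂ] K, ∀ X : H →L[ℂ] K,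
        KreinPositive JH (errOp JH A W X - errOp JH A W X₀)) ↔
      ((∀ z : K, 0 ≤ (inner ℂ (JH (W (A z))) (A z) : ℂ).re) ∧
        (∀ x : H, ∃ (z : K) (h : H),
          kreinAdjoint JK JH A (W h) = 0 ∧ x = A z + h)) := by
  -- Preliminaries
  have hJJ : ∀ y : H, JH (JH y) = y := fun y => by
    have := ContinuousLinearMap.ext_iff.mp hJH2 y
    simpa using this
  have hKK : ∀ y : K, JK (JK y) = y := fun y => by
    have := ContinuousLinearMap.ext_iff.mp hJK2 y
    simpa using this
  have hJKinj : ∀ y : K, JK y = 0 → y = 0 := fun y hy => by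
    have := congrArg JK hy
    rwa [hKK, map_zero] at this
  have hJs : ContinuousLinearMap.adjoint JH = JH := hJHsa
  have hWsym : ∀ a b : H, (inner ℂ (JH (W a)) b : ℂ) = inner ℂ a (JH (W b)) := by
    intro a b
    have hJmove : ∀ u v : H, (inner ℂ (JH u) v : ℂ) = inner ℂ u (JH v) := fun u v => by
      rw [← adjoint_inner_left, hJs]
    have hWb : ContinuousLinearMap.adjoint W (JH b) = JH (W b) := by
      have := ContinuousLinearMap.ext_iff.mp hW b
      simp only [comp_apply] at this
      rw [← this, hJJ]
    rw [hJmove, ← hWb, adjoint_inner_right]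
  have key : ∀ (X : H →L[ℂ] K) (x : H),
      (inner ℂ (JH (errOp JH A W X x)) x : ℂ)
        = inner ℂ (JH (W (A (X x) - x))) (A (X x) - x) := by
    intro X x
    have h1 : errOp JH A W X x
        = JH (ContinuousLinearMap.adjoint (A ∘L X - 1) (JH (W (A (X x) - x)))) := by
      simp only [errOp, kreinAdjoint, comp_apply, ContinuousLinearMap.sub_apply, ContinuousLinearMap.one_apply, map_sub]
    rw [h1, hJJ, adjoint_inner_left]
    simp [sub_apply, comp_apply, one_apply, inner_sub_left, inner_sub_right]
  have herrsa : ∀ X : H →L[ℂ] K,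
      kreinAdjoint JH JH (errOp JH A W X) = errOp JH A W X := by
    intro X
    have hW' : JH * star W * JH = W := hW
    have hJ2 : JH * JH = 1 := hJH2
    have hJs' : star JH = JH := hJHsa
    have hWJ : star W * JH = JH * W := by
      have h0 : JH * (JH * star W * JH) = JH * W := by rw [hW']
      calc star W * JH = JH * JH * star W * JH := by rw [hJ2, one_mul]
      _ = JH * (JH * star W * JH) := by simp only [mul_assoc]
      _ = JH * W := h0
    set B : H →L[ℂ] H := A ∘L X - 1 with hB
    show JH * star (JH * star B * JH * (W * B)) * JH = JH * star B * JH * (W * B)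
    simp only [star_mul, star_star, hJs', mul_assoc, hJ2, mul_one]
    rw [show star W * (JH * B) = JH * (W * B) from by rw [← mul_assoc, hWJ, mul_assoc]]
  have hksub : ∀ S T : H →L[ℂ] H,
      kreinAdjoint JH JH (S - T) = kreinAdjoint JH JH S - kreinAdjoint JH JH T := by
    intro S T
    show JH * star (S - T) * JH = JH * star S * JH - JH * star T * JH
    rw [star_sub, mul_sub, sub_mul]
  have hexp : ∀ u v : H, (inner ℂ (JH (W (u+v))) (u+v) : ℂ).re
      = (inner ℂ (JH (W u)) u : ℂ).re + 2*((inner ℂ (JH (W u)) v : ℂ)).re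
        + (inner ℂ (JH (W v)) v : ℂ).re := by
    intro u v
    have h1 : (inner ℂ (JH (W (u+v))) (u+v) : ℂ)
        = inner ℂ (JH (W u)) u + inner ℂ (JH (W u)) v + inner ℂ (JH (W v)) u
          + inner ℂ (JH (W v)) v := by
      simp only [map_add, inner_add_left, inner_add_right]
      ring
    have h2 : (inner ℂ (JH (W v)) u : ℂ) = starRingEnd ℂ (inner ℂ (JH (W u)) v) := by
      rw [hWsym v u, ← inner_conj_symm]
    rw [h1, h2]
    simp only [Complex.add_re, Complex.conj_re]
    ring
  constructor
  · -- minimizer exists → conditions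
    rintro ⟨X₀, hmin⟩
    set u : H → H := fun x => A (X₀ x) - x with hu
    have hineq : ∀ (x : H) (D : H →L[ℂ] K),
        0 ≤ 2 * (inner ℂ (JH (W (u x))) (A (D x)) : ℂ).re
          + (inner ℂ (JH (W (A (D x)))) (A (D x)) : ℂ).re := by
      intro x D
      have h0 := (hmin (X₀ + D)).2 x
      have hsub : (inner ℂ (JH ((errOp JH A W (X₀+D) - errOp JH A W X₀) x)) x : ℂ)
          = inner ℂ (JH (errOp JH A W (X₀+D) x)) x
            - inner ℂ (JH (errOp JH A W X₀ x)) x := by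
        simp [ContinuousLinearMap.sub_apply, map_sub, inner_sub_left]
      rw [hsub, Complex.sub_re, key, key] at h0
      have hXD : A ((X₀ + D) x) - x = u x + A (D x) := by
        simp only [ContinuousLinearMap.add_apply, map_add, hu]
        abel
      rw [hXD, hexp] at h0
      linarith
    have hmaster : ∀ (x : H), x ≠ 0 → ∀ (k : K) (c : ℂ),
        0 ≤ 2*((c * inner ℂ (JH (W (u x))) (A k)) : ℂ).re
          + Complex.normSq c * (inner ℂ (JH (W (A k))) (A k) : ℂ).re := by
      intro x hx k c
      obtain ⟨D, hD⟩ := aux_rankone x hx k c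
      have h0 := hineq x D
      rw [hD, map_smul] at h0
      have e1 : (inner ℂ (JH (W (u x))) (c • A k) : ℂ)
          = c * inner ℂ (JH (W (u x))) (A k) := inner_smul_right _ _ _
      have e2 : (inner ℂ (JH (W (c • A k))) (c • A k) : ℂ)
          = (Complex.normSq c : ℂ) * inner ℂ (JH (W (A k))) (A k) := by
        rw [map_smul, map_smul, inner_smul_left, inner_smul_right,
          Complex.normSq_eq_conj_mul_self]
        ring
      rw [e1, e2] at h0
      rw [Complex.re_ofReal_mul] at h0
      linarith
    have hq : ∀ k : K, 0 ≤ (inner ℂ (JH (W (A k))) (A k) : ℂ).re := by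
      intro k
      by_cases hH : ∃ x : H, x ≠ 0
      · obtain ⟨x, hx⟩ := hH
        apply aux_quad1 _ ((inner ℂ (JH (W (u x))) (A k) : ℂ).re)
        intro t ht
        have h0 := hmaster x hx k (t:ℂ)
        rw [Complex.re_ofReal_mul, Complex.normSq_ofReal] at h0
        calc (0:ℝ) ≤ _ := h0
        _ = 2 * (t * (inner ℂ (JH (W (u x))) (A k) : ℂ).re)
            + t^2 * (inner ℂ (JH (W (A k))) (A k) : ℂ).re := by ring
      · push_neg at hH
        rw [hH (A k)]
        simp
    have hα : ∀ (x : H) (k : K), (inner ℂ (JH (W (u x))) (A k) : ℂ) = 0 := by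
      intro x k
      by_cases hx : x = 0
      · have : u x = 0 := by simp [hu, hx]
        rw [this]
        simp
      · exact aux_quad2 _ (hq k) _ (fun c => hmaster x hx k c)
    refine ⟨hq, fun x => ?_⟩
    refine ⟨X₀ x, x - A (X₀ x), ?_, by abel⟩
    have h1 : ContinuousLinearMap.adjoint A (JH (W (u x))) = 0 := by
      have h2 := hα x (ContinuousLinearMap.adjoint A (JH (W (u x))))
      rw [← adjoint_inner_left] at h2
      exact inner_self_eq_zero.mp h2
    have h3 : x - A (X₀ x) = -(u x) := by simp [hu]
    rw [h3]
    simp only [kreinAdjoint, comp_apply, map_neg, h1]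
    simp
  · -- conditions → minimizer exists
    rintro ⟨hb1, hb2⟩
    obtain ⟨X₀, hX₀⟩ := aux_construct JK JH A W hb2
    have hAdj0 : ∀ x : H,
        ContinuousLinearMap.adjoint A (JH (W (A (X₀ x) - x))) = 0 := by
      intro x
      apply hJKinj
      have := hX₀ x
      simpa [kreinAdjoint, comp_apply] using this
    refine ⟨X₀, fun X => ⟨?_, ?_⟩⟩
    · rw [hksub, herrsa, herrsa]
    · intro x
      have hsub : (inner ℂ (JH ((errOp JH A W X - errOp JH A W X₀) x)) x : ℂ)
          = inner ℂ (JH (errOp JH A W X x)) x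
            - inner ℂ (JH (errOp JH A W X₀ x)) x := by
        simp [ContinuousLinearMap.sub_apply, map_sub, inner_sub_left]
      rw [hsub, Complex.sub_re, key, key]
      set k : K := X x - X₀ x with hk
      have hXD : A (X x) - x = (A (X₀ x) - x) + A k := by
        simp only [hk, map_sub]
        abel
      rw [hXD, hexp]
      have hcross : (inner ℂ (JH (W (A (X₀ x) - x))) (A k) : ℂ) = 0 := by
        rw [← adjoint_inner_left, hAdj0]
        simp
      rw [hcross]
      simp only [Complex.zero_re]
      have := hb1 k
      linarith
end
end

section
/- Let A ∈ L(K,H) and let W ∈ L(H) be Krein-selfadjoint. Suppose ran A is W-nonnegative, ran A + ker(A^# W) = H, and X₀ ∈ L(H,K) satisfies A^# W (A X₀ − I) = 0. Then M := (AX₀−I)^# W (AX₀−I) is the maximum, in the Krein order, of the set {Z ∈ L(H) : Z^# = Z, W − Z is Krein-positive, and ran Z ⊆ ker A^#}; that is, M^# = M, W − M is Krein-positive, ran M ⊆ ker A^#, and M − Z is Krein-positive for every Z in that set. -/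
open ContinuousLinearMap

noncomputable section

variable {H K : Type*} [NormedAddCommGroup H] [InnerProductSpace ℂ H] [CompleteSpace H]
  [NormedAddCommGroup K] [InnerProductSpace ℂ K] [CompleteSpace K]

/-- if `ran A` is `W`-nonnegative, `ran A + ker(A^# W) = H` and `X₀` solves
the normal equation `A^# W (AX₀ − I) = 0`, then `M := (AX₀−I)^# W (AX₀−I)` is the maximum,
in the Krein order, of the set of Krein-selfadjoint `Z` with `W − Z` Krein-positive and
`ran Z ⊆ ker A^#`. -/
theorem stmt6
    [TopologicalSpace.SeparableSpace H] [TopologicalSpace.SeparableSpace K]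
    (JH : H →L[ℂ] H) (hJHsa : IsSelfAdjoint JH) (hJH2 : JH ∘L JH = 1)
    (JK : K →L[ℂ] K) (hJKsa : IsSelfAdjoint JK) (hJK2 : JK ∘L JK = 1)
    (A : K →L[ℂ] H) (W : H →L[ℂ] H)
    (hW : JH ∘L (ContinuousLinearMap.adjoint W) ∘L JH = W)
    (hran : ∀ z : K, 0 ≤ (inner ℂ (JH (W (A z))) (A z) : ℂ).re)
    (hdec : ∀ x : H, ∃ (z : K) (h : H),
      kreinAdjoint JK JH A (W h) = 0 ∧ x = A z + h)
    (X₀ : H →L[ℂ] K)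
    (hX₀ : (kreinAdjoint JK JH A) ∘L (W ∘L (A ∘L X₀ - 1)) = 0) :
    kreinAdjoint JH JH (errOp JH A W X₀) = errOp JH A W X₀ ∧
      KreinPositive JH (W - errOp JH A W X₀) ∧
      (∀ x : H, kreinAdjoint JK JH A (errOp JH A W X₀ x) = 0) ∧
      (∀ Z : H →L[ℂ] H,
        (kreinAdjoint JH JH Z = Z ∧ KreinPositive JH (W - Z) ∧
          ∀ x : H, kreinAdjoint JK JH A (Z x) = 0) →
        KreinPositive JH (errOp JH A W X₀ - Z)) := by
  have hJHadj : ContinuousLinearMap.adjoint JH = JH := isSelfAdjoint_iff'.mp hJHsa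
  have hJH2' : ∀ x : H, JH (JH x) = x := by
    intro x
    have := ContinuousLinearMap.ext_iff.mp hJH2 x
    simpa using this
  have hJK2' : ∀ x : K, JK (JK x) = x := by
    intro x
    have := ContinuousLinearMap.ext_iff.mp hJK2 x
    simpa using this
  set B : H →L[ℂ] H := A ∘L X₀ - 1 with hBdef
  have hMapp : ∀ x : H, errOp JH A W X₀ x
      = JH (ContinuousLinearMap.adjoint B (JH (W (B x)))) := fun x => rfl
  have hJJ : ∀ a b : H, (inner ℂ (JH a) (JH b) : ℂ) = inner ℂ a b := by
    intro a b
    rw [← hJHadj, adjoint_inner_left, hJHadj, hJH2']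
  have hJmove : ∀ a b : H, (inner ℂ (JH a) b : ℂ) = inner ℂ a (JH b) := by
    intro a b
    rw [← hJHadj, adjoint_inner_left, hJHadj]
  have hWadj : ∀ v : H, ContinuousLinearMap.adjoint W (JH v) = JH (W v) := by
    intro v
    have h := ContinuousLinearMap.ext_iff.mp hW v
    simp only [ContinuousLinearMap.comp_apply] at h
    have h2 := congrArg JH h
    rwa [hJH2'] at h2
  have hwsym : ∀ u v : H, (inner ℂ (JH (W u)) v : ℂ) = inner ℂ u (JH (W v)) := by
    intro u v
    rw [hJmove, ← adjoint_inner_right, hWadj]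
  have horth1 : ∀ (x : H) (z : K), (inner ℂ (JH (W (B x))) (A z) : ℂ) = 0 := by
    intro x z
    have h0 : kreinAdjoint JK JH A (W (B x)) = 0 := by
      have := ContinuousLinearMap.ext_iff.mp hX₀ x
      simpa using this
    have h1 : ContinuousLinearMap.adjoint A (JH (W (B x))) = 0 := by
      have h2 := congrArg JK h0
      simp only [kreinAdjoint, ContinuousLinearMap.comp_apply] at h2
      rwa [hJK2', map_zero] at h2
    rw [← adjoint_inner_left, h1, inner_zero_left]
  have horth2 : ∀ (x : H) (z : K), (inner ℂ (JH (W (A z))) (B x) : ℂ) = 0 := by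
    intro x z
    rw [hwsym, ← inner_conj_symm, horth1, map_zero]
  have hx : ∀ x : H, x = A (X₀ x) - B x := by
    intro x
    simp [hBdef]
  have hsplit : ∀ x : H, (inner ℂ (JH (W x)) x : ℂ)
      = inner ℂ (JH (W (A (X₀ x)))) (A (X₀ x)) + inner ℂ (JH (W (B x))) (B x) := by
    intro x
    have e1 : (inner ℂ (JH (W (A (X₀ x) - B x))) (A (X₀ x) - B x) : ℂ)
        = inner ℂ (JH (W x)) x := by rw [← hx]
    rw [← e1, map_sub, map_sub, inner_sub_left, inner_sub_right, inner_sub_right,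
      horth1, horth2]
    ring
  have hMinner : ∀ x : H, (inner ℂ (JH (errOp JH A W X₀ x)) x : ℂ)
      = inner ℂ (JH (W (B x))) (B x) := by
    intro x
    rw [hMapp, hJH2', adjoint_inner_left]
  have kadj_sub : ∀ S T : H →L[ℂ] H,
      kreinAdjoint JH JH (S - T) = kreinAdjoint JH JH S - kreinAdjoint JH JH T := by
    intro S T
    ext v
    simp [kreinAdjoint, map_sub]
  have hWk : kreinAdjoint JH JH W = W := hW
  have hMsa : kreinAdjoint JH JH (errOp JH A W X₀) = errOp JH A W X₀ := by
    ext x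
    apply ext_inner_right ℂ
    intro y
    have lhs : (inner ℂ ((kreinAdjoint JH JH (errOp JH A W X₀)) x) y : ℂ)
        = inner ℂ (JH (W (B x))) (B (JH y)) := by
      show (inner ℂ (JH (ContinuousLinearMap.adjoint (errOp JH A W X₀) (JH x))) y : ℂ) = _
      rw [hJmove, adjoint_inner_left, hMapp, hJJ, adjoint_inner_right, ← hwsym]
    have rhs : (inner ℂ (errOp JH A W X₀ x) y : ℂ)
        = inner ℂ (JH (W (B x))) (B (JH y)) := by
      rw [hMapp, hJmove, adjoint_inner_left]
    rw [lhs, rhs]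
  refine ⟨hMsa, ⟨?_, ?_⟩, ?_, ?_⟩
  · rw [kadj_sub, hWk, hMsa]
  · intro x
    have e : (inner ℂ (JH ((W - errOp JH A W X₀) x)) x : ℂ)
        = inner ℂ (JH (W (A (X₀ x)))) (A (X₀ x)) := by
      rw [ContinuousLinearMap.sub_apply, map_sub, inner_sub_left, hsplit x, hMinner x]
      ring
    rw [e]
    exact hran (X₀ x)
  · intro x
    have h1 : ContinuousLinearMap.adjoint A
        (ContinuousLinearMap.adjoint B (JH (W (B x)))) = 0 := by
      have key : ∀ z : K, (inner ℂ (ContinuousLinearMap.adjoint A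
          (ContinuousLinearMap.adjoint B (JH (W (B x))))) z : ℂ) = 0 := by
        intro z
        rw [adjoint_inner_left, adjoint_inner_left]
        have hBA : B (A z) = A (X₀ (A z)) - A z := by simp [hBdef]
        rw [hBA, inner_sub_right, horth1, horth1, sub_zero]
      have := key (ContinuousLinearMap.adjoint A
        (ContinuousLinearMap.adjoint B (JH (W (B x)))))
      exact inner_self_eq_zero.mp this
    show JK (ContinuousLinearMap.adjoint A (JH (errOp JH A W X₀ x))) = 0
    rw [hMapp, hJH2', h1, map_zero]
  · rintro Z ⟨hZ1, hZ2, hZ3⟩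
    have hZadj : ∀ v : H, ContinuousLinearMap.adjoint Z (JH v) = JH (Z v) := by
      intro v
      have h := ContinuousLinearMap.ext_iff.mp hZ1 v
      simp only [kreinAdjoint, ContinuousLinearMap.comp_apply] at h
      have h2 := congrArg JH h
      rwa [hJH2'] at h2
    have hzsym : ∀ u v : H, (inner ℂ (JH (Z u)) v : ℂ) = inner ℂ u (JH (Z v)) := by
      intro u v
      rw [hJmove, ← adjoint_inner_right, hZadj]
    have horthZ : ∀ (x : H) (z : K), (inner ℂ (JH (Z x)) (A z) : ℂ) = 0 := by
      intro x z
      have h1 : ContinuousLinearMap.adjoint A (JH (Z x)) = 0 := by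
        have h2 := congrArg JK (hZ3 x)
        simp only [kreinAdjoint, ContinuousLinearMap.comp_apply] at h2
        rwa [hJK2', map_zero] at h2
      rw [← adjoint_inner_left, h1, inner_zero_left]
    have hZA : ∀ z : K, Z (A z) = 0 := by
      intro z
      have h0 : JH (Z (A z)) = 0 := by
        apply ext_inner_right ℂ
        intro v
        rw [hzsym, ← inner_conj_symm, horthZ, map_zero, inner_zero_left]
      have h2 := congrArg JH h0
      rwa [hJH2', map_zero] at h2
    have hZinner : ∀ x : H, (inner ℂ (JH (Z x)) x : ℂ) = inner ℂ (JH (Z (B x))) (B x) := by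
      intro x
      have hzx : Z x = - Z (B x) := by
        calc Z x = Z (A (X₀ x) - B x) := by rw [← hx]
          _ = Z (A (X₀ x)) - Z (B x) := map_sub _ _ _
          _ = - Z (B x) := by rw [hZA, zero_sub]
      calc (inner ℂ (JH (Z x)) x : ℂ) = inner ℂ (JH (- Z (B x))) x := by rw [hzx]
        _ = - inner ℂ (JH (Z (B x))) x := by rw [map_neg, inner_neg_left]
        _ = - inner ℂ (JH (Z (B x))) (A (X₀ x) - B x) := by rw [← hx]
        _ = inner ℂ (JH (Z (B x))) (B x) := by
            rw [inner_sub_right, horthZ]; ring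
    constructor
    · rw [kadj_sub, hMsa, hZ1]
    · intro x
      have e : (inner ℂ (JH ((errOp JH A W X₀ - Z) x)) x : ℂ)
          = inner ℂ (JH ((W - Z) (B x))) (B x) := by
        rw [ContinuousLinearMap.sub_apply, ContinuousLinearMap.sub_apply,
          map_sub, map_sub, inner_sub_left, inner_sub_left, hMinner x, hZinner x]
      rw [e]
      exact hZ2.2 (B x)
end
end

section
/- Let A ∈ L(K,H) and let W ∈ L(H) be Krein-selfadjoint and trace class. The following are equivalent: (i) ran A is W-nonnegative and there exists X₀ ∈ L(H,K) such that tr_{J_H}((AX₀−I)^# W (AX₀−I)) ≤ tr_{J_H}((AX−I)^# W (AX−I)) for every X ∈ L(H,K); (ii) ran A is W-nonnegative and ran A + ker(A^# W) = H; (iii) there exists X₀ ∈ L(H,K) such that (AX−I)^# W (AX−I) − (AX₀−I)^# W (AX₀−I) is Krein-positive for every X ∈ L(H,K). In this case, any X₀ satisfying (iii) also attains the minimum in (i). -/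
open ContinuousLinearMap

noncomputable section

local notation "⟪" x ", " y "⟫" => @inner ℂ _ _ x y

variable {H K : Type*} [NormedAddCommGroup H] [InnerProductSpace ℂ H] [CompleteSpace H]
  [NormedAddCommGroup K] [InnerProductSpace ℂ K] [CompleteSpace K]

/-- Auxiliary: a real quadratic `a t² + 2 c t` nonnegative for all `t` forces `0 ≤ a`, `c = 0`. -/
lemma aux_quad_nonneg {a c : ℝ} (h : ∀ t : ℝ, 0 ≤ a * t ^ 2 + 2 * c * t) : 0 ≤ a ∧ c = 0 := by
  have h1 := h 1
  have h2 := h (-1)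
  have ha : 0 ≤ a := by nlinarith
  refine ⟨ha, ?_⟩
  by_contra hc
  have hc2 : 0 < c ^ 2 := by positivity
  have ha1 : (0:ℝ) < a + 1 := by linarith
  have key := h (-c / (a + 1))
  have e : a * (-c / (a + 1)) ^ 2 + 2 * c * (-c / (a + 1)) =
      (a * c ^ 2 - 2 * c ^ 2 * (a + 1)) / (a + 1) ^ 2 := by
    field_simp
    ring
  rw [e] at key
  rcases div_nonneg_iff.mp key with ⟨hX, _⟩ | ⟨_, hq⟩
  · nlinarith
  · nlinarith

omit [CompleteSpace H] in
/-- Auxiliary: expansion of the (possibly indefinite) quadratic form of a symmetric operator. -/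
lemma aux_quad_vec (G : H →L[ℂ] H) (hGsym : ∀ u v : H, ⟪G u, v⟫ = ⟪u, G v⟫) (u w : H) (c : ℂ) :
    (⟪G (u + c • w), u + c • w⟫).re
      = (⟪G u, u⟫).re + 2 * (c * ⟪G u, w⟫).re + ‖c‖ ^ 2 * (⟪G w, w⟫).re := by
  have h2 : ⟪G w, u⟫ = (starRingEnd ℂ) ⟪G u, w⟫ := by
    rw [hGsym w u, ← inner_conj_symm]
  have e1 : ⟪G (u + c • w), u + c • w⟫
      = ⟪G u, u⟫ + c * ⟪G u, w⟫ + (starRingEnd ℂ) (c * ⟪G u, w⟫)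
        + (c * (starRingEnd ℂ) c) * ⟪G w, w⟫ := by
    rw [map_add, map_smul]
    rw [inner_add_left, inner_add_right, inner_add_right, inner_smul_left, inner_smul_right,
      inner_smul_left, inner_smul_right, h2]
    rw [map_mul]
    ring
  rw [e1]
  have e2 : c * (starRingEnd ℂ) c = ((‖c‖ ^ 2 : ℝ) : ℂ) := by
    rw [Complex.mul_conj]
    norm_cast
    rw [Complex.normSq_eq_norm_sq]
  rw [e2]
  have e3 : (((‖c‖ ^ 2 : ℝ) : ℂ) * ⟪G w, w⟫).re = ‖c‖ ^ 2 * (⟪G w, w⟫).re :=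
    Complex.re_ofReal_mul _ _
  simp only [Complex.add_re, Complex.conj_re, e3]
  ring

omit [CompleteSpace K] in
/-- Douglas-type factorization lemma via the closed graph theorem. -/
lemma aux_douglas_s7 {E : Type*} [NormedAddCommGroup E] [InnerProductSpace ℂ E] [CompleteSpace E]
    (T : E →L[ℂ] K) (B : H →L[ℂ] K) (h : ∀ x, ∃ e, T e = B x) :
    ∃ C : H →L[ℂ] E, T ∘L C = B := by
  classical
  haveI : CompleteSpace (LinearMap.ker (T : E →ₗ[ℂ] K)) :=
    (ContinuousLinearMap.isClosed_ker T).completeSpace_coe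
  set Kr : Submodule ℂ E := (LinearMap.ker (T : E →ₗ[ℂ] K))ᗮ with hKr
  let P : E →L[ℂ] Kr := Submodule.orthogonalProjectionOnto Kr
  have hker : ∀ v ∈ LinearMap.ker (T : E →ₗ[ℂ] K), P v = 0 := by
    intro v hv
    exact Submodule.orthogonalProjectionOnto_apply_of_mem_orthogonal
      ((LinearMap.ker (T : E →ₗ[ℂ] K)).le_orthogonal_orthogonal hv)
  let c : H → E := fun x => (P (Classical.choose (h x)) : E)
  have hwd : ∀ (x : H) (e : E), T e = B x → (P e : E) = c x := by
    intro x e he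
    have h0 : e - Classical.choose (h x) ∈ LinearMap.ker (T : E →ₗ[ℂ] K) := by
      simp [LinearMap.mem_ker, map_sub, he, Classical.choose_spec (h x)]
    have h1 := hker _ h0
    rw [map_sub] at h1
    have : P e = P (Classical.choose (h x)) := by rwa [sub_eq_zero] at h1
    simp only [c, ← this]
  have hmem : ∀ x, c x ∈ Kr := fun x => (P _).2
  have hT : ∀ x, T (c x) = B x := by
    intro x
    have he : T (Classical.choose (h x)) = B x := Classical.choose_spec (h x)
    set e := Classical.choose (h x) with hedef
    have h1 : e - (P e : E) ∈ Krᗮ := Submodule.sub_starProjection_mem_orthogonal (K := Kr) e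
    have h2 : Krᗮ = LinearMap.ker (T : E →ₗ[ℂ] K) := Submodule.orthogonal_orthogonal _
    rw [h2, LinearMap.mem_ker, map_sub, sub_eq_zero] at h1
    show T (P e : E) = B x
    rw [← he]
    exact h1.symm
  let Clin : H →ₗ[ℂ] E :=
    { toFun := c
      map_add' := fun x y => by
        have hx := Classical.choose_spec (h x)
        have hy := Classical.choose_spec (h y)
        have := hwd (x + y) (Classical.choose (h x) + Classical.choose (h y))
          (by rw [map_add, hx, hy, map_add])
        rw [← this, map_add]
        push_cast
        rfl
      map_smul' := fun a x => by
        have hx := Classical.choose_spec (h x)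
        have := hwd (a • x) (a • Classical.choose (h x))
          (by rw [map_smul, hx, map_smul])
        show c (a • x) = a • c x
        rw [← this, map_smul]
        push_cast
        rfl }
  have hcont : Continuous Clin := by
    apply Clin.continuous_of_seq_closed_graph
    intro u x y hux huy
    have hyK : y ∈ Kr := by
      have hcl : IsClosed (Kr : Set E) := (LinearMap.ker (T : E →ₗ[ℂ] K)).isClosed_orthogonal
      exact hcl.mem_of_tendsto huy (Filter.Eventually.of_forall fun n => hmem (u n))
    have hTy : T y = B x := by
      have h1 : Filter.Tendsto (fun n => T (Clin (u n))) Filter.atTop (nhds (T y)) :=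
        (T.continuous.tendsto y).comp huy
      have h2 : (fun n => T (Clin (u n))) = fun n => B (u n) := by
        ext n; exact hT (u n)
      rw [h2] at h1
      have h3 : Filter.Tendsto (fun n => B (u n)) Filter.atTop (nhds (B x)) :=
        (B.continuous.tendsto x).comp hux
      exact tendsto_nhds_unique h1 h3
    have h5 := hwd x y hTy
    have hy : (P y : E) = y := (Submodule.starProjection_eq_self_iff (K := Kr)).mpr hyK
    show y = c x
    rw [← h5, hy]
  refine ⟨⟨Clin, hcont⟩, ?_⟩
  ext x
  exact hT x

section HS

variable {ι : Type*}

omit [CompleteSpace H] in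
lemma aux_parseval (b : HilbertBasis ι ℂ H) (x : H) :
    HasSum (fun i => ‖(⟪b i, x⟫ : ℂ)‖ ^ 2) (‖x‖ ^ 2) := by
  have h := (b.hasSum_inner_mul_inner x x).mapL Complex.reCLM
  have h1 : ∀ i, ((⟪x, b i⟫ : ℂ) * (⟪b i, x⟫ : ℂ)).re = ‖(⟪b i, x⟫ : ℂ)‖ ^ 2 := by
    intro i
    have e1 : (⟪b i, x⟫ : ℂ) = starRingEnd ℂ (⟪x, b i⟫ : ℂ) := by
      rw [inner_conj_symm]
    rw [e1, Complex.mul_conj, Complex.ofReal_re, Complex.normSq_eq_norm_sq,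
      RCLike.norm_conj]
  have h2 : (⟪x, x⟫ : ℂ).re = ‖x‖ ^ 2 := by
    simpa using (inner_self_eq_norm_sq (𝕜 := ℂ) x)
  have h3 : ((‖x‖ : ℂ) ^ 2).re = ‖x‖ ^ 2 := by rw [← Complex.ofReal_pow, Complex.ofReal_re]
  simpa [h1, h2, h3] using h

omit [CompleteSpace H] in
lemma aux_summable_parseval (b : HilbertBasis ι ℂ H) (x : H) :
    Summable fun i => ‖(⟪b i, x⟫ : ℂ)‖ ^ 2 := (aux_parseval b x).summable

omit [CompleteSpace H] in
lemma aux_tsum_parseval (b : HilbertBasis ι ℂ H) (x : H) :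
    ∑' i, ‖(⟪b i, x⟫ : ℂ)‖ ^ 2 = ‖x‖ ^ 2 := (aux_parseval b x).tsum_eq

lemma aux_hs_adjoint (b : HilbertBasis ι ℂ H) {S : H →L[ℂ] H}
    (hS : Summable fun i => ‖S (b i)‖ ^ 2) :
    Summable fun j => ‖(adjoint S) (b j)‖ ^ 2 := by
  set f : ι × ι → ℝ := fun p => ‖(⟪S (b p.1), b p.2⟫ : ℂ)‖ ^ 2 with hf
  have hnn : 0 ≤ f := fun p => by positivity
  have hfib : ∀ i, Summable fun j => f (i, j) := by
    intro i
    have := aux_summable_parseval b (S (b i))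
    apply this.congr
    intro j
    rw [← norm_inner_symm]
  have hsum1 : Summable fun i => ∑' j, f (i, j) := by
    apply hS.congr
    intro i
    rw [← aux_tsum_parseval b (S (b i))]
    congr 1; ext j; rw [← norm_inner_symm]
  have hfprod : Summable f := (summable_prod_of_nonneg hnn).mpr ⟨hfib, hsum1⟩
  have hswap : Summable fun p : ι × ι => f p.swap := hfprod.prod_symm
  have h2 := ((summable_prod_of_nonneg (f := fun p : ι × ι => f p.swap)
    (fun p => hnn p.swap)).mp hswap).2
  apply h2.congr
  intro j
  have hterm : ∀ i, f (i, j) = ‖(⟪b i, (adjoint S) (b j)⟫ : ℂ)‖ ^ 2 := by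
    intro i
    simp only [hf, adjoint_inner_right]
  calc ∑' i, f (Prod.swap (j, i)) = ∑' i, ‖(⟪b i, (adjoint S) (b j)⟫ : ℂ)‖ ^ 2 := by
        simp only [Prod.swap_prod_mk, hterm]
    _ = ‖(adjoint S) (b j)‖ ^ 2 := aux_tsum_parseval b _

omit [CompleteSpace H] in
lemma aux_hs_comp_left (b : HilbertBasis ι ℂ H) {S : H →L[ℂ] H}
    (hS : Summable fun i => ‖S (b i)‖ ^ 2) (T : H →L[ℂ] H) :
    Summable fun i => ‖T (S (b i))‖ ^ 2 := by
  apply Summable.of_nonneg_of_le (fun i => by positivity)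
    (fun i => ?_) (hS.mul_left (‖T‖ ^ 2))
  have h1 : ‖T (S (b i))‖ ≤ ‖T‖ * ‖S (b i)‖ := T.le_opNorm _
  calc ‖T (S (b i))‖ ^ 2 ≤ (‖T‖ * ‖S (b i)‖) ^ 2 := by
        apply pow_le_pow_left₀ (norm_nonneg _) h1
    _ = ‖T‖ ^ 2 * ‖S (b i)‖ ^ 2 := by ring

lemma aux_hs_comp_right (b : HilbertBasis ι ℂ H) {S : H →L[ℂ] H}
    (hS : Summable fun i => ‖S (b i)‖ ^ 2) (T : H →L[ℂ] H) :
    Summable fun i => ‖S (T (b i))‖ ^ 2 := by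
  have h1 : Summable fun i => ‖(adjoint S) (b i)‖ ^ 2 := aux_hs_adjoint b hS
  have h2 : Summable fun i => ‖(adjoint T) ((adjoint S) (b i))‖ ^ 2 := aux_hs_comp_left b h1 _
  have h3 : Summable fun i => ‖(adjoint T ∘L adjoint S) (b i)‖ ^ 2 := h2
  have h4 := aux_hs_adjoint b h3
  apply h4.congr
  intro i
  congr 2
  rw [adjoint_comp, adjoint_adjoint, adjoint_adjoint]
  rfl

end HS

/-- `S` is a Hilbert–Schmidt operator (w.r.t. the Hilbert basis `b`; this is in fact
independent of the basis). -/
def IsHilbertSchmidt {ι : Type*} (b : HilbertBasis ι ℂ H) (S : H →L[ℂ] H) : Prop :=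
  Summable fun i => ‖S (b i)‖ ^ 2

/-- `S` is trace class: it is the product of two Hilbert–Schmidt operators. -/
def IsTraceClass {ι : Type*} (b : HilbertBasis ι ℂ H) (S : H →L[ℂ] H) : Prop :=
  ∃ S₁ S₂ : H →L[ℂ] H, IsHilbertSchmidt b S₁ ∧ IsHilbertSchmidt b S₂ ∧ S = S₁ ∘L S₂

/-- The `J`-trace `tr_J(S) = tr(J∘S)` of a (trace-class) operator `S`, computed in the
Hilbert basis `b` (real because `J∘S` is selfadjoint in the situations considered). -/
def trJ {ι : Type*} (JH : H →L[ℂ] H) (b : HilbertBasis ι ℂ H) (S : H →L[ℂ] H) : ℝ :=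
  ∑' i, (inner ℂ (JH (S (b i))) (b i) : ℂ).re

set_option maxHeartbeats 2000000 in
/-- for trace-class Krein-selfadjoint `W`, the equivalence of (i) existence of
a minimizer of the `J`-trace functional with `ran A` `W`-nonnegative, (ii) `ran A`
`W`-nonnegative and `ran A + ker(A^# W) = H`, (iii) existence of a Krein-order minimizer;
and any Krein-order minimizer attains the `J`-trace minimum. -/
theorem stmt7 {ι : Type*}
    [TopologicalSpace.SeparableSpace H] [TopologicalSpace.SeparableSpace K]
    (JH : H →L[ℂ] H) (hJHsa : IsSelfAdjoint JH) (hJH2 : JH ∘L JH = 1)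
    (JK : K →L[ℂ] K) (hJKsa : IsSelfAdjoint JK) (hJK2 : JK ∘L JK = 1)
    (b : HilbertBasis ι ℂ H)
    (A : K →L[ℂ] H) (W : H →L[ℂ] H)
    (hW : JH ∘L (ContinuousLinearMap.adjoint W) ∘L JH = W)
    (hWtc : IsTraceClass b W) :
    List.TFAE
      [ -- (i)
        (∀ z : K, 0 ≤ (inner ℂ (JH (W (A z))) (A z) : ℂ).re) ∧
          ∃ X₀ : H →L[ℂ] K, ∀ X : H →L[ℂ] K,
            trJ JH b (errOp JH A W X₀) ≤ trJ JH b (errOp JH A W X),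
        -- (ii)
        (∀ z : K, 0 ≤ (inner ℂ (JH (W (A z))) (A z) : ℂ).re) ∧
          ∀ x : H, ∃ (z : K) (h : H),
            kreinAdjoint JK JH A (W h) = 0 ∧ x = A z + h,
        -- (iii)
        ∃ X₀ : H →L[ℂ] K, ∀ X : H →L[ℂ] K,
          KreinPositive JH (errOp JH A W X - errOp JH A W X₀) ]
    ∧
    ∀ X₀ : H →L[ℂ] K,
      (∀ X : H →L[ℂ] K, KreinPositive JH (errOp JH A W X - errOp JH A W X₀)) →
      ∀ X : H →L[ℂ] K, trJ JH b (errOp JH A W X₀) ≤ trJ JH b (errOp JH A W X) := by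
  classical
  obtain ⟨S₁, S₂, hS₁, hS₂, hWfact⟩ := hWtc
  set G : H →L[ℂ] H := JH ∘L W with hGdef
  have hGapp : ∀ y : H, G y = JH (W y) := fun y => by rw [hGdef]; rfl
  have hJad : adjoint JH = JH := by rw [← star_eq_adjoint]; exact hJHsa.star_eq
  have hJ : ∀ y : H, JH (JH y) = y := by
    intro y
    have := congrArg (fun M : H →L[ℂ] H => M y) hJH2
    simpa using this
  have hJK1 : ∀ y : K, JK (JK y) = y := by
    intro y
    have := congrArg (fun M : K →L[ℂ] K => M y) hJK2
    simpa using this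
  have hWJ : ∀ y : H, adjoint W (JH y) = JH (W y) := by
    intro y
    have h0 : JH (adjoint W (JH y)) = W y := by
      have := congrArg (fun M : H →L[ℂ] H => M y) hW
      simpa using this
    calc adjoint W (JH y) = JH (JH (adjoint W (JH y))) := (hJ _).symm
      _ = JH (W y) := by rw [h0]
  have hJsym : ∀ u v : H, ⟪JH u, v⟫ = ⟪u, JH v⟫ := by
    intro u v
    conv_lhs => rw [← hJad]
    exact adjoint_inner_left JH v u
  have hGadj : adjoint G = G := by
    rw [hGdef, adjoint_comp, hJad]
    ext x
    simp only [coe_comp', Function.comp_apply]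
    exact hWJ x
  have hGsym : ∀ u v : H, ⟪G u, v⟫ = ⟪u, G v⟫ := by
    intro u v
    conv_lhs => rw [← hGadj]
    exact adjoint_inner_left G v u
  -- summability of the mixed diagonal series
  have key_sum : ∀ T R : H →L[ℂ] H, Summable fun i => (⟪G (T (b i)), R (b i)⟫ : ℂ) := by
    intro T R
    apply Summable.of_norm
    have maj : ∀ i, ‖(⟪G (T (b i)), R (b i)⟫ : ℂ)‖ ≤
        (1/2 : ℝ) * (‖S₂ (T (b i))‖ ^ 2 + ‖(adjoint S₁) (JH (R (b i)))‖ ^ 2) := by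
      intro i
      have e : (⟪G (T (b i)), R (b i)⟫ : ℂ)
          = ⟪S₂ (T (b i)), (adjoint S₁) (JH (R (b i)))⟫ := by
        rw [hGapp, hWfact]
        show (⟪JH (S₁ (S₂ (T (b i)))), R (b i)⟫ : ℂ) = _
        rw [hJsym, ← adjoint_inner_right]
      rw [e]
      have hb := norm_inner_le_norm (𝕜 := ℂ) (S₂ (T (b i))) ((adjoint S₁) (JH (R (b i))))
      have haux : ∀ p q : ℝ, 0 ≤ p → 0 ≤ q → p * q ≤ (1/2) * (p^2 + q^2) := by
        intro p q hp hq; nlinarith [sq_nonneg (p - q)]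
      exact hb.trans (haux _ _ (norm_nonneg _) (norm_nonneg _))
    have hs1 : Summable fun i => ‖S₂ (T (b i))‖ ^ 2 := aux_hs_comp_right b hS₂ T
    have hs2 : Summable fun i => ‖(adjoint S₁) (JH (R (b i)))‖ ^ 2 := by
      have := aux_hs_comp_right b (aux_hs_adjoint b hS₁) (JH ∘L R)
      exact this.congr fun i => rfl
    exact Summable.of_nonneg_of_le (fun i => norm_nonneg _) maj ((hs1.add hs2).mul_left _)
  have herr : ∀ (X : H →L[ℂ] K) (x : H),
      (⟪JH ((errOp JH A W X) x), x⟫ : ℂ) = ⟪G ((A ∘L X - 1) x), (A ∘L X - 1) x⟫ := by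
    intro X x
    have e0 : (errOp JH A W X) x
        = JH ((adjoint (A ∘L X - 1)) (JH (W ((A ∘L X - 1) x)))) := rfl
    rw [e0, hJ, adjoint_inner_left, hGapp]
  have htrJ : ∀ X : H →L[ℂ] K, trJ JH b (errOp JH A W X)
      = ∑' i, (⟪G ((A ∘L X - 1) (b i)), (A ∘L X - 1) (b i)⟫ : ℂ).re := by
    intro X
    unfold trJ
    exact tsum_congr fun i => by rw [herr]
  have diag_sum : ∀ T : H →L[ℂ] H, Summable fun i => (⟪G (T (b i)), T (b i)⟫ : ℂ).re :=
    fun T => (Complex.hasSum_re (key_sum T T).hasSum).summable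
  have hTadd : ∀ (X₀ Δ : H →L[ℂ] K) (c : ℂ) (x : H),
      (A ∘L (X₀ + c • Δ) - 1) x = (A ∘L X₀ - 1) x + c • A (Δ x) := by
    intro X₀ Δ c x
    simp only [sub_apply, coe_comp', Function.comp_apply, add_apply,
      ContinuousLinearMap.smul_apply, map_add, map_smul, one_apply]
    abel
  have herr_sub : ∀ (X X₀ : H →L[ℂ] K) (x : H),
      (⟪JH ((errOp JH A W X - errOp JH A W X₀) x), x⟫ : ℂ).re
        = (⟪G ((A ∘L X - 1) x), (A ∘L X - 1) x⟫ : ℂ).re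
          - (⟪G ((A ∘L X₀ - 1) x), (A ∘L X₀ - 1) x⟫ : ℂ).re := by
    intro X X₀ x
    rw [sub_apply, map_sub, inner_sub_left, Complex.sub_re, herr, herr]
  have err_inner : ∀ (Y : H →L[ℂ] K) (x v : H),
      (⟪(errOp JH A W Y) x, v⟫ : ℂ) = ⟪G ((A ∘L Y - 1) x), (A ∘L Y - 1) (JH v)⟫ := by
    intro Y x v
    have e0 : (errOp JH A W Y) x
        = JH ((adjoint (A ∘L Y - 1)) (JH (W ((A ∘L Y - 1) x)))) := rfl
    rw [e0, hJsym, adjoint_inner_left, hGapp]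
  have kasa : ∀ Y : H →L[ℂ] K, kreinAdjoint JH JH (errOp JH A W Y) = errOp JH A W Y := by
    intro Y
    ext x
    apply ext_inner_right ℂ
    intro v
    have e0 : (kreinAdjoint JH JH (errOp JH A W Y)) x
        = JH ((adjoint (errOp JH A W Y)) (JH x)) := rfl
    calc (⟪(kreinAdjoint JH JH (errOp JH A W Y)) x, v⟫ : ℂ)
        = ⟪(adjoint (errOp JH A W Y)) (JH x), JH v⟫ := by rw [e0, hJsym]
      _ = ⟪JH x, (errOp JH A W Y) (JH v)⟫ := adjoint_inner_left _ _ _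
      _ = (starRingEnd ℂ) ⟪(errOp JH A W Y) (JH v), JH x⟫ := (inner_conj_symm _ _).symm
      _ = (starRingEnd ℂ) ⟪G ((A ∘L Y - 1) (JH v)), (A ∘L Y - 1) (JH (JH x))⟫ := by
            rw [err_inner]
      _ = (starRingEnd ℂ) ⟪G ((A ∘L Y - 1) (JH v)), (A ∘L Y - 1) x⟫ := by rw [hJ]
      _ = ⟪(A ∘L Y - 1) x, G ((A ∘L Y - 1) (JH v))⟫ := inner_conj_symm _ _
      _ = ⟪G ((A ∘L Y - 1) x), (A ∘L Y - 1) (JH v)⟫ := (hGsym _ _).symm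
      _ = ⟪(errOp JH A W Y) x, v⟫ := (err_inner Y x v).symm
  have ka_sub : ∀ S S' : H →L[ℂ] H, kreinAdjoint JH JH (S - S')
      = kreinAdjoint JH JH S - kreinAdjoint JH JH S' := by
    intro S S'
    simp only [kreinAdjoint, map_sub, sub_comp, comp_sub]
  have kp_of_normal : ∀ X₀ : H →L[ℂ] K,
      (∀ z : K, 0 ≤ (⟪G (A z), A z⟫ : ℂ).re) →
      (∀ x : H, adjoint A (G ((A ∘L X₀ - 1) x)) = 0) →
      ∀ X : H →L[ℂ] K, KreinPositive JH (errOp JH A W X - errOp JH A W X₀) := by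
    intro X₀ hP hNE X
    constructor
    · rw [ka_sub, kasa, kasa]
    · intro x
      rw [herr_sub]
      have hX : X = X₀ + (1:ℂ) • (X - X₀) := by simp
      have hdec : (A ∘L X - 1) x = (A ∘L X₀ - 1) x + (1:ℂ) • A ((X - X₀) x) := by
        conv_lhs => rw [hX]
        exact hTadd X₀ (X - X₀) 1 x
      rw [hdec, aux_quad_vec G hGsym]
      have hw : (⟪G ((A ∘L X₀ - 1) x), A ((X - X₀) x)⟫ : ℂ) = 0 := by
        calc (⟪G ((A ∘L X₀ - 1) x), A ((X - X₀) x)⟫ : ℂ)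
            = ⟪adjoint A (G ((A ∘L X₀ - 1) x)), (X - X₀) x⟫ :=
              (adjoint_inner_left A _ _).symm
          _ = 0 := by rw [hNE x, inner_zero_left]
      have ha := hP ((X - X₀) x)
      rw [hw]
      simp only [mul_zero, Complex.zero_re, norm_one, one_pow, one_mul]
      linarith
  have normal_of_kp : ∀ X₀ : H →L[ℂ] K,
      (∀ X, KreinPositive JH (errOp JH A W X - errOp JH A W X₀)) →
      (∀ z : K, 0 ≤ (⟪G (A z), A z⟫ : ℂ).re)
        ∧ ∀ x : H, adjoint A (G ((A ∘L X₀ - 1) x)) = 0 := by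
    intro X₀ hKP
    have core : ∀ (Δ : H →L[ℂ] K) (x : H),
        0 ≤ (⟪G (A (Δ x)), A (Δ x)⟫ : ℂ).re
          ∧ (⟪G ((A ∘L X₀ - 1) x), A (Δ x)⟫ : ℂ) = 0 := by
      intro Δ x
      have hq : ∀ c : ℂ,
          0 ≤ 2 * (c * ⟪G ((A ∘L X₀ - 1) x), A (Δ x)⟫).re
            + ‖c‖ ^ 2 * (⟪G (A (Δ x)), A (Δ x)⟫ : ℂ).re := by
        intro c
        have h1 := (hKP (X₀ + c • Δ)).2 x
        rw [herr_sub, hTadd, aux_quad_vec G hGsym] at h1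
        linarith
      have hreal : ∀ t : ℝ, 0 ≤ (⟪G (A (Δ x)), A (Δ x)⟫ : ℂ).re * t ^ 2
          + 2 * (⟪G ((A ∘L X₀ - 1) x), A (Δ x)⟫ : ℂ).re * t := by
        intro t
        have h2 := hq (t : ℂ)
        have e1 : ‖(t:ℂ)‖ ^ 2 = t ^ 2 := by
          rw [Complex.norm_real]; exact sq_abs t
        have e2 : ((t:ℂ) * ⟪G ((A ∘L X₀ - 1) x), A (Δ x)⟫).re
            = t * (⟪G ((A ∘L X₀ - 1) x), A (Δ x)⟫ : ℂ).re := Complex.re_ofReal_mul _ _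
        rw [e1, e2] at h2
        linarith
      obtain ⟨ha, hre⟩ := aux_quad_nonneg hreal
      have himag : ∀ t : ℝ, 0 ≤ (⟪G (A (Δ x)), A (Δ x)⟫ : ℂ).re * t ^ 2
          + 2 * (-(⟪G ((A ∘L X₀ - 1) x), A (Δ x)⟫ : ℂ).im) * t := by
        intro t
        have h2 := hq ((t : ℂ) * Complex.I)
        have e1 : ‖(t:ℂ) * Complex.I‖ ^ 2 = t ^ 2 := by
          rw [norm_mul, Complex.norm_I, mul_one, Complex.norm_real]; exact sq_abs t
        have e2 : (((t:ℂ) * Complex.I) * ⟪G ((A ∘L X₀ - 1) x), A (Δ x)⟫).re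
            = t * (-(⟪G ((A ∘L X₀ - 1) x), A (Δ x)⟫ : ℂ).im) := by
          rw [mul_assoc, Complex.re_ofReal_mul, Complex.I_mul_re]
        rw [e1, e2] at h2
        linarith
      obtain ⟨-, him⟩ := aux_quad_nonneg himag
      refine ⟨ha, ?_⟩
      apply Complex.ext
      · simpa using hre
      · simp only [Complex.zero_im]
        linarith
    constructor
    · intro z
      rcases subsingleton_or_nontrivial H with hs | hn
      · have hz : A z = 0 := Subsingleton.elim _ _
        simp [hz]
      · obtain ⟨x, hx⟩ := exists_ne (0 : H)
        have h0 := (core ((innerSL ℂ x).smulRight z) x).1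
        have hΔx : ((innerSL ℂ x).smulRight z) x = (⟪x, x⟫ : ℂ) • z := rfl
        rw [hΔx, map_smul, map_smul] at h0
        rw [inner_smul_left, inner_smul_right] at h0
        have e : ((starRingEnd ℂ) (⟪x, x⟫ : ℂ) * ((⟪x, x⟫ : ℂ) * ⟪G (A z), A z⟫)).re
            = Complex.normSq (⟪x, x⟫ : ℂ) * (⟪G (A z), A z⟫ : ℂ).re := by
          rw [← mul_assoc, mul_comm ((starRingEnd ℂ) (⟪x, x⟫ : ℂ)), Complex.mul_conj,
            Complex.re_ofReal_mul]
        rw [e] at h0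
        have hxx : (⟪x, x⟫ : ℂ) ≠ 0 := inner_self_ne_zero.mpr hx
        have hpos : 0 < Complex.normSq (⟪x, x⟫ : ℂ) := by
          rwa [Complex.normSq_pos]
        nlinarith
    · intro x
      by_cases hx : x = 0
      · simp [hx]
      · have key : ∀ z : K, (⟪G ((A ∘L X₀ - 1) x), A z⟫ : ℂ) = 0 := by
          intro z
          have h0 := (core ((innerSL ℂ x).smulRight z) x).2
          have hΔx : ((innerSL ℂ x).smulRight z) x = (⟪x, x⟫ : ℂ) • z := rfl
          rw [hΔx, map_smul, inner_smul_right] at h0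
          have hxx : (⟪x, x⟫ : ℂ) ≠ 0 := inner_self_ne_zero.mpr hx
          exact (mul_eq_zero.mp h0).resolve_left hxx
        have hz : ∀ z : K, (⟪adjoint A (G ((A ∘L X₀ - 1) x)), z⟫ : ℂ) = 0 := by
          intro z
          rw [adjoint_inner_left]
          exact key z
        exact inner_self_eq_zero.mp (hz (adjoint A (G ((A ∘L X₀ - 1) x))))
  have min_of_kp : ∀ X₀ : H →L[ℂ] K,
      (∀ X, KreinPositive JH (errOp JH A W X - errOp JH A W X₀)) →
      ∀ X, trJ JH b (errOp JH A W X₀) ≤ trJ JH b (errOp JH A W X) := by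
    intro X₀ hKP X
    rw [htrJ, htrJ]
    refine Summable.tsum_le_tsum (fun i => ?_) (diag_sum _) (diag_sum _)
    have h1 := (hKP X).2 (b i)
    rw [herr_sub] at h1
    linarith
  have normal_of_min : ∀ X₀ : H →L[ℂ] K,
      (∀ X, trJ JH b (errOp JH A W X₀) ≤ trJ JH b (errOp JH A W X)) →
      ∀ x : H, adjoint A (G ((A ∘L X₀ - 1) x)) = 0 := by
    intro X₀ hmin
    have core : ∀ Δ : H →L[ℂ] K,
        (∑' i, (⟪G ((A ∘L X₀ - 1) (b i)), A (Δ (b i))⟫ : ℂ)) = 0 := by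
      intro Δ
      have hsum1 : Summable fun i => (⟪G ((A ∘L X₀ - 1) (b i)), A (Δ (b i))⟫ : ℂ) := by
        have := key_sum (A ∘L X₀ - 1) (A ∘L Δ)
        exact this.congr fun i => rfl
      set w : ℂ := ∑' i, (⟪G ((A ∘L X₀ - 1) (b i)), A (Δ (b i))⟫ : ℂ) with hwdef
      set a : ℝ := ∑' i, (⟪G (A (Δ (b i))), A (Δ (b i))⟫ : ℂ).re with hadef
      have hq : ∀ c : ℂ, 0 ≤ 2 * (c * w).re + ‖c‖ ^ 2 * a := by
        intro c
        have h1 := hmin (X₀ + c • Δ)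
        rw [htrJ, htrJ] at h1
        have hpt : ∀ i, (⟪G ((A ∘L (X₀ + c • Δ) - 1) (b i)),
              (A ∘L (X₀ + c • Δ) - 1) (b i)⟫ : ℂ).re
            = (⟪G ((A ∘L X₀ - 1) (b i)), (A ∘L X₀ - 1) (b i)⟫ : ℂ).re
              + (2 * (c * ⟪G ((A ∘L X₀ - 1) (b i)), A (Δ (b i))⟫).re
                + ‖c‖ ^ 2 * (⟪G (A (Δ (b i))), A (Δ (b i))⟫ : ℂ).re) := by
          intro i
          rw [hTadd, aux_quad_vec G hGsym]
          ring
        rw [tsum_congr hpt] at h1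
        have s0 : Summable fun i =>
            (⟪G ((A ∘L X₀ - 1) (b i)), (A ∘L X₀ - 1) (b i)⟫ : ℂ).re := diag_sum _
        have s1 : Summable fun i =>
            2 * (c * (⟪G ((A ∘L X₀ - 1) (b i)), A (Δ (b i))⟫ : ℂ)).re := by
          have h2 := (Complex.hasSum_re (hsum1.mul_left c).hasSum).summable
          exact h2.mul_left 2
        have s2 : Summable fun i =>
            ‖c‖ ^ 2 * (⟪G (A (Δ (b i))), A (Δ (b i))⟫ : ℂ).re := by
          have h2 : Summable fun i => (⟪G (A (Δ (b i))), A (Δ (b i))⟫ : ℂ).re := by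
            have := diag_sum (A ∘L Δ)
            exact this.congr fun i => rfl
          exact h2.mul_left _
        rw [Summable.tsum_add s0 (s1.add s2), Summable.tsum_add s1 s2] at h1
        have e1 : ∑' i, 2 * (c * (⟪G ((A ∘L X₀ - 1) (b i)), A (Δ (b i))⟫ : ℂ)).re
            = 2 * (c * w).re := by
          rw [tsum_mul_left]
          congr 1
          rw [hwdef, ← Complex.re_tsum (hsum1.mul_left c), tsum_mul_left]
        have e2 : ∑' i, ‖c‖ ^ 2 * (⟪G (A (Δ (b i))), A (Δ (b i))⟫ : ℂ).re
            = ‖c‖ ^ 2 * a := tsum_mul_left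
        rw [e1, e2] at h1
        linarith
      have hreal : ∀ t : ℝ, 0 ≤ a * t ^ 2 + 2 * w.re * t := by
        intro t
        have h2 := hq (t : ℂ)
        have e1 : ‖(t:ℂ)‖ ^ 2 = t ^ 2 := by
          rw [Complex.norm_real]; exact sq_abs t
        have e2 : ((t:ℂ) * w).re = t * w.re := Complex.re_ofReal_mul _ _
        rw [e1, e2] at h2
        linarith
      obtain ⟨ha, hre⟩ := aux_quad_nonneg hreal
      have himag : ∀ t : ℝ, 0 ≤ a * t ^ 2 + 2 * (-w.im) * t := by
        intro t
        have h2 := hq ((t : ℂ) * Complex.I)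
        have e1 : ‖(t:ℂ) * Complex.I‖ ^ 2 = t ^ 2 := by
          rw [norm_mul, Complex.norm_I, mul_one, Complex.norm_real]; exact sq_abs t
        have e2 : (((t:ℂ) * Complex.I) * w).re = t * (-w.im) := by
          rw [mul_assoc, Complex.re_ofReal_mul, Complex.I_mul_re]
        rw [e1, e2] at h2
        linarith
      obtain ⟨-, him⟩ := aux_quad_nonneg himag
      apply Complex.ext
      · simpa using hre
      · simp only [Complex.zero_im]
        linarith
    have yzero : ∀ z : K, adjoint (A ∘L X₀ - 1) (G (A z)) = 0 := by
      intro z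
      have hu : ∀ u : H, (⟪u, adjoint (A ∘L X₀ - 1) (G (A z))⟫ : ℂ) = 0 := by
        intro u
        have h0 := core ((innerSL ℂ u).smulRight z)
        have hterm : ∀ i, (⟪G ((A ∘L X₀ - 1) (b i)),
              A (((innerSL ℂ u).smulRight z) (b i))⟫ : ℂ)
            = (⟪u, b i⟫ : ℂ) * ⟪b i, adjoint (A ∘L X₀ - 1) (G (A z))⟫ := by
          intro i
          have e0 : ((innerSL ℂ u).smulRight z) (b i) = (⟪u, b i⟫ : ℂ) • z := rfl
          rw [e0, map_smul, inner_smul_right]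
          congr 1
          rw [hGsym, adjoint_inner_right]
        rw [tsum_congr hterm, b.tsum_inner_mul_inner] at h0
        exact h0
      exact inner_self_eq_zero.mp (hu _)
    intro x
    have hz : ∀ z : K, (⟪adjoint A (G ((A ∘L X₀ - 1) x)), z⟫ : ℂ) = 0 := by
      intro z
      rw [adjoint_inner_left]
      calc (⟪G ((A ∘L X₀ - 1) x), A z⟫ : ℂ)
          = ⟪(A ∘L X₀ - 1) x, G (A z)⟫ := hGsym _ _
        _ = ⟪x, adjoint (A ∘L X₀ - 1) (G (A z))⟫ := by rw [adjoint_inner_right]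
        _ = 0 := by rw [yzero, inner_zero_right]
    exact inner_self_eq_zero.mp (hz (adjoint A (G ((A ∘L X₀ - 1) x))))
  have ii_to_normal :
      (∀ x : H, ∃ (z : K) (h : H), kreinAdjoint JK JH A (W h) = 0 ∧ x = A z + h) →
      ∃ X₀ : H →L[ℂ] K, ∀ x : H, adjoint A (G ((A ∘L X₀ - 1) x)) = 0 := by
    intro hii
    have hker : ∀ h : H, kreinAdjoint JK JH A (W h) = 0 → adjoint A (G h) = 0 := by
      intro h h0
      have e0 : kreinAdjoint JK JH A (W h) = JK (adjoint A (JH (W h))) := rfl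
      rw [e0] at h0
      have h1 := congrArg JK h0
      rw [hJK1, map_zero] at h1
      rw [hGapp]
      exact h1
    have hexist : ∀ x : H, ∃ e : K, (adjoint A ∘L G ∘L A) e = (adjoint A ∘L G) x := by
      intro x
      obtain ⟨z, h, h0, hx⟩ := hii x
      refine ⟨z, ?_⟩
      have hAGh := hker h h0
      simp only [coe_comp', Function.comp_apply]
      rw [hx, map_add, map_add, hAGh, add_zero]
    obtain ⟨C, hC⟩ := aux_douglas_s7 (adjoint A ∘L G ∘L A) (adjoint A ∘L G) hexist
    refine ⟨C, fun x => ?_⟩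
    have hCx := congrArg (fun M : H →L[ℂ] K => M x) hC
    simp only [coe_comp', Function.comp_apply] at hCx
    have e0 : (A ∘L C - 1) x = A (C x) - x := by
      simp [sub_apply, coe_comp', Function.comp_apply]
    rw [e0, map_sub, map_sub, hCx, sub_self]
  constructor
  · tfae_have 1 → 2 := by
      rintro ⟨hP, X₀, hmin⟩
      refine ⟨hP, fun x => ?_⟩
      have hNE := normal_of_min X₀ hmin
      refine ⟨X₀ x, x - A (X₀ x), ?_, by abel⟩
      have e0 : kreinAdjoint JK JH A (W (x - A (X₀ x)))
          = JK (adjoint A (G (x - A (X₀ x)))) := by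
        rw [hGapp]; rfl
      rw [e0]
      have e1 : x - A (X₀ x) = -((A ∘L X₀ - 1) x) := by
        simp [sub_apply, coe_comp', Function.comp_apply]
      rw [e1, map_neg, map_neg, hNE x, neg_zero, map_zero]
    tfae_have 2 → 3 := by
      rintro ⟨hP, hdec⟩
      obtain ⟨X₀, hNE⟩ := ii_to_normal hdec
      refine ⟨X₀, kp_of_normal X₀ (fun z => ?_) hNE⟩
      have h1 := hP z
      rwa [← hGapp] at h1
    tfae_have 3 → 1 := by
      rintro ⟨X₀, hKP⟩
      have hP := (normal_of_kp X₀ hKP).1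
      refine ⟨fun z => ?_, X₀, min_of_kp X₀ hKP⟩
      have h1 := hP z
      rwa [hGapp] at h1
    tfae_finish
  · intro X₀ hKP X
    exact min_of_kp X₀ hKP X
end
end

section
/- Let A ∈ L(K,H) and let W ∈ L(H) be Krein-selfadjoint and trace class. The following are equivalent: (i) the equation Az = x admits a W-ILSS for every x ∈ H; (ii) A admits an indefinite W-inverse; (iii) ran A is W-nonnegative and there exists X₀ ∈ L(H,K) such that tr_{J_H}((AX₀−I)^# W (AX₀−I)) ≤ tr_{J_H}((AX−I)^# W (AX−I)) for every X ∈ L(H,K). -/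
open ContinuousLinearMap

noncomputable section

variable {H K : Type*} [NormedAddCommGroup H] [InnerProductSpace ℂ H] [CompleteSpace H]
  [NormedAddCommGroup K] [InnerProductSpace ℂ K] [CompleteSpace K]

private lemma key_scalar (q : ℝ) (l : ℂ)
    (h : ∀ c : ℂ, 0 ≤ ‖c‖ ^ 2 * q + 2 * ((starRingEnd ℂ) c * l).re) : l = 0 ∧ 0 ≤ q := by
  have hre : ∀ r : ℝ, ((starRingEnd ℂ) ((r : ℝ) • l) * l).re = r * ‖l‖ ^ 2 := by
    intro r
    have hn : ‖l‖ ^ 2 = l.re * l.re + l.im * l.im := by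
      rw [Complex.sq_norm, Complex.normSq_apply]
    simp only [Complex.real_smul, map_mul, Complex.conj_ofReal, Complex.mul_re, Complex.mul_im,
      Complex.ofReal_re, Complex.ofReal_im, Complex.conj_re, Complex.conj_im]
    rw [hn]; ring
  have hnorm : ∀ r : ℝ, ‖(r : ℝ) • l‖ = |r| * ‖l‖ := by
    intro r; rw [norm_smul, Real.norm_eq_abs]
  have hl : l = 0 := by
    by_contra hl0
    have hln : 0 < ‖l‖ := norm_pos_iff.mpr hl0
    have key : ∀ t : ℝ, 0 < t → 0 ≤ t ^ 2 * ‖l‖ ^ 2 * q - 2 * (t * ‖l‖ ^ 2) := by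
      intro t ht
      have h1 := h ((-t : ℝ) • l)
      rw [hre, hnorm, abs_neg, abs_of_pos ht, mul_pow] at h1
      linarith
    by_cases hq : 0 < q
    · have hk := key (1 / q) (by positivity)
      have h2 : (1 / q) ^ 2 * ‖l‖ ^ 2 * q - 2 * (1 / q * ‖l‖ ^ 2) = -(‖l‖ ^ 2 / q) := by
        field_simp; ring
      rw [h2] at hk
      have : 0 < ‖l‖ ^ 2 / q := div_pos (pow_pos hln 2) hq
      linarith
    · have hk := key 1 one_pos
      push_neg at hq
      nlinarith
  refine ⟨hl, ?_⟩
  have := h 1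
  simpa [hl] using this

private lemma conj_inner_op (Wh : H →L[ℂ] H) (hsa : ContinuousLinearMap.adjoint Wh = Wh)
    (a c : H) : (inner ℂ (Wh a) c : ℂ) = inner ℂ a (Wh c) := by
  conv_lhs => rw [← hsa]
  rw [adjoint_inner_left]

private lemma expand_quad (Wh : H →L[ℂ] H) (hsa : ContinuousLinearMap.adjoint Wh = Wh)
    (a e : H) :
    (inner ℂ (Wh (a + e)) (a + e) : ℂ).re
      = (inner ℂ (Wh a) a : ℂ).re + 2 * (inner ℂ (Wh a) e : ℂ).re + (inner ℂ (Wh e) e : ℂ).re := by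
  have h1 : (inner ℂ (Wh e) a : ℂ) = starRingEnd ℂ (inner ℂ (Wh a) e : ℂ) := by
    rw [inner_conj_symm, conj_inner_op Wh hsa e a]
  have h2 : (inner ℂ (Wh (a + e)) (a + e) : ℂ)
      = inner ℂ (Wh a) a + inner ℂ (Wh a) e + inner ℂ (Wh e) a + inner ℂ (Wh e) e := by
    simp only [map_add, inner_add_left, inner_add_right]
    ring
  rw [h2, h1]
  simp only [Complex.add_re, Complex.conj_re]
  ring

private lemma expand_quad_smul (Wh : H →L[ℂ] H) (hsa : ContinuousLinearMap.adjoint Wh = Wh)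
    (w e : H) (c : ℂ) :
    (inner ℂ (Wh (c • w + e)) (c • w + e) : ℂ).re
      = ‖c‖ ^ 2 * (inner ℂ (Wh w) w : ℂ).re
        + 2 * ((starRingEnd ℂ) c * (inner ℂ (Wh w) e : ℂ)).re
        + (inner ℂ (Wh e) e : ℂ).re := by
  rw [expand_quad Wh hsa (c • w) e]
  have h1 : (inner ℂ (Wh (c • w)) (c • w) : ℂ) = ((‖c‖ ^ 2 : ℝ) : ℂ) * inner ℂ (Wh w) w := by
    rw [map_smul, inner_smul_left, inner_smul_right, ← mul_assoc]
    congr 1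
    rw [mul_comm, Complex.mul_conj, Complex.normSq_eq_norm_sq]
    try push_cast
    try ring
  have h2 : (inner ℂ (Wh (c • w)) e : ℂ) = (starRingEnd ℂ) c * inner ℂ (Wh w) e := by
    rw [map_smul, inner_smul_left]
  rw [h1, h2, Complex.re_ofReal_mul]

private lemma of_wilss (A : K →L[ℂ] H) (Wh : H →L[ℂ] H)
    (hsa : ContinuousLinearMap.adjoint Wh = Wh) (x : H) (u : K)
    (hmin : ∀ z : K, (inner ℂ (Wh (A u - x)) (A u - x) : ℂ).re
      ≤ (inner ℂ (Wh (A z - x)) (A z - x) : ℂ).re) :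
    (∀ v : K, 0 ≤ (inner ℂ (Wh (A v)) (A v) : ℂ).re)
      ∧ ContinuousLinearMap.adjoint A (Wh (A u - x)) = 0 := by
  have hkey : ∀ v : K, (inner ℂ (Wh (A v)) (A u - x) : ℂ) = 0
      ∧ 0 ≤ (inner ℂ (Wh (A v)) (A v) : ℂ).re := by
    intro v
    apply key_scalar
    intro c
    have h1 := hmin (u + c • v)
    have he : A (u + c • v) - x = c • A v + (A u - x) := by
      rw [map_add, map_smul]; abel
    rw [he, expand_quad_smul Wh hsa (A v) (A u - x) c] at h1
    linarith
  constructor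
  · exact fun v => (hkey v).2
  · have hy : ∀ v : K, (inner ℂ v (ContinuousLinearMap.adjoint A (Wh (A u - x))) : ℂ) = 0 := by
      intro v
      rw [adjoint_inner_right, ← conj_inner_op Wh hsa]
      exact (hkey v).1
    have := hy (ContinuousLinearMap.adjoint A (Wh (A u - x)))
    rwa [inner_self_eq_zero] at this

private lemma to_min (A : K →L[ℂ] H) (Wh : H →L[ℂ] H)
    (hsa : ContinuousLinearMap.adjoint Wh = Wh)
    (hpos : ∀ v : K, 0 ≤ (inner ℂ (Wh (A v)) (A v) : ℂ).re) (x : H) (u : K)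
    (horth : ContinuousLinearMap.adjoint A (Wh (A u - x)) = 0) :
    ∀ z : K, (inner ℂ (Wh (A u - x)) (A u - x) : ℂ).re
      ≤ (inner ℂ (Wh (A z - x)) (A z - x) : ℂ).re := by
  intro z
  have he : A z - x = A (z - u) + (A u - x) := by rw [map_sub]; abel
  rw [he, expand_quad Wh hsa]
  have hcross : (inner ℂ (Wh (A (z - u))) (A u - x) : ℂ) = 0 := by
    rw [conj_inner_op Wh hsa, ← adjoint_inner_right, horth, inner_zero_right]
  rw [hcross]
  simp only [Complex.zero_re]
  have := hpos (z - u)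
  linarith

private lemma douglas (T : K →L[ℂ] K) (Bo : H →L[ℂ] K) (h : ∀ x : H, ∃ u : K, T u = Bo x) :
    ∃ G : H →L[ℂ] K, ∀ x : H, T (G x) = Bo x := by
  classical
  set N : Submodule ℂ K := (T.ker)ᗮ with hN
  haveI : CompleteSpace (T.ker) :=
    (ContinuousLinearMap.isClosed_ker T).completeSpace_coe
  have uniq : ∀ w₁ w₂ : K, w₁ ∈ N → w₂ ∈ N → T w₁ = T w₂ → w₁ = w₂ := by
    intro w₁ w₂ h₁ h₂ hT
    have hk : w₁ - w₂ ∈ T.ker := by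
      simp [LinearMap.mem_ker, map_sub, hT]
    have h' : w₁ - w₂ ∈ N := N.sub_mem h₁ h₂
    have : (inner ℂ (w₁ - w₂) (w₁ - w₂) : ℂ) = 0 := h' _ hk
    rw [inner_self_eq_zero, sub_eq_zero] at this
    exact this
  have hex : ∀ x : H, ∃ w : K, w ∈ N ∧ T w = Bo x := by
    intro x
    obtain ⟨u, hu⟩ := h x
    refine ⟨u - (Submodule.orthogonalProjectionOnto (T.ker) u : K),
      Submodule.sub_starProjection_mem_orthogonal u, ?_⟩
    have hk : T ((Submodule.orthogonalProjectionOnto (T.ker) u : K)) = 0 :=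
      (Submodule.orthogonalProjectionOnto (T.ker) u).2
    rw [map_sub, hk, sub_zero, hu]
  choose w hwN hwT using hex
  have hadd : ∀ x y : H, w (x + y) = w x + w y := by
    intro x y
    refine uniq _ _ (hwN _) (N.add_mem (hwN x) (hwN y)) ?_
    rw [hwT, map_add, map_add, hwT, hwT]
  have hsmul : ∀ (c : ℂ) (x : H), w (c • x) = c • w x := by
    intro c x
    refine uniq _ _ (hwN _) (N.smul_mem c (hwN x)) ?_
    rw [hwT, map_smul, map_smul, hwT]
  let g : H →ₗ[ℂ] K :=
    { toFun := w, map_add' := hadd, map_smul' := hsmul }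
  have hcont : Continuous g := by
    apply g.continuous_of_seq_closed_graph
    intro u x y hux huy
    have h1 : Filter.Tendsto (fun n => T (g (u n))) Filter.atTop (nhds (T y)) :=
      (T.continuous.tendsto y).comp huy
    have h2 : Filter.Tendsto (fun n => Bo (u n)) Filter.atTop (nhds (Bo x)) :=
      (Bo.continuous.tendsto x).comp hux
    have heq : (fun n => T (g (u n))) = fun n => Bo (u n) := by
      funext n; exact hwT (u n)
    rw [heq] at h1
    have hTy : T y = Bo x := tendsto_nhds_unique h1 h2
    have hyN : y ∈ N := by
      have hc : IsClosed (N : Set K) := (T.ker).isClosed_orthogonal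
      exact hc.mem_of_tendsto huy (Filter.Eventually.of_forall fun n => hwN (u n))
    exact uniq y (w x) hyN (hwN x) (by rw [hTy, hwT])
  exact ⟨{ toLinearMap := g, cont := hcont }, fun x => hwT x⟩

section HS

variable {ι : Type*} (b : HilbertBasis ι ℂ H)

private lemma hs_iff (S : H →L[ℂ] H) :
    IsHilbertSchmidt b S ↔ (∑' i, (‖S (b i)‖₊ ^ 2 : ENNReal)) ≠ ⊤ := by
  rw [IsHilbertSchmidt]
  have h1 : (fun i => ‖S (b i)‖ ^ 2) = fun i => ((‖S (b i)‖₊ ^ 2 : NNReal) : ℝ) := by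
    funext i; push_cast; rfl
  rw [h1, NNReal.summable_coe, ← ENNReal.tsum_coe_ne_top_iff_summable]
  congr! 2 with i

private lemma parseval_sq (y : H) :
    HasSum (fun i => ‖(inner ℂ (b i) y : ℂ)‖ ^ 2) (‖y‖ ^ 2) := by
  have h0 := b.hasSum_inner_mul_inner y y
  have h1 := Complex.hasSum_re h0
  have h2 : (fun i => ((inner ℂ y (b i) : ℂ) * (inner ℂ (b i) y : ℂ)).re)
      = fun i => ‖(inner ℂ (b i) y : ℂ)‖ ^ 2 := by
    funext i
    rw [← inner_conj_symm (b i) y, RCLike.mul_conj, RCLike.norm_conj]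
    norm_cast
  have h3 : (inner ℂ y y : ℂ).re = ‖y‖ ^ 2 := by
    rw [inner_self_eq_norm_sq_to_K (𝕜 := ℂ)]
    norm_cast
  rw [h2, h3] at h1
  exact h1

private lemma parseval_nn (y : H) :
    (∑' i, (‖(inner ℂ (b i) y : ℂ)‖₊ ^ 2 : ENNReal)) = (‖y‖₊ ^ 2 : ENNReal) := by
  have hsum := parseval_sq b y
  calc (∑' i, (‖(inner ℂ (b i) y : ℂ)‖₊ ^ 2 : ENNReal))
      = ∑' i, ENNReal.ofReal (‖(inner ℂ (b i) y : ℂ)‖ ^ 2) := by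
        apply tsum_congr; intro i
        rw [ENNReal.ofReal_pow (norm_nonneg _), ofReal_norm, enorm_eq_nnnorm]
    _ = ENNReal.ofReal (∑' i, ‖(inner ℂ (b i) y : ℂ)‖ ^ 2) :=
        (ENNReal.ofReal_tsum_of_nonneg (fun i => by positivity) hsum.summable).symm
    _ = ENNReal.ofReal (‖y‖ ^ 2) := by rw [hsum.tsum_eq]
    _ = (‖y‖₊ ^ 2 : ENNReal) := by
        rw [ENNReal.ofReal_pow (norm_nonneg _), ofReal_norm, enorm_eq_nnnorm]

private lemma hs_adjoint_sum (S : H →L[ℂ] H) :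
    (∑' i, (‖ContinuousLinearMap.adjoint S (b i)‖₊ ^ 2 : ENNReal))
      = ∑' j, (‖S (b j)‖₊ ^ 2 : ENNReal) := by
  calc (∑' i, (‖ContinuousLinearMap.adjoint S (b i)‖₊ ^ 2 : ENNReal))
      = ∑' i, ∑' j, (‖(inner ℂ (b j) (ContinuousLinearMap.adjoint S (b i)) : ℂ)‖₊ ^ 2 : ENNReal) := by
        exact tsum_congr fun i => (parseval_nn b _).symm
    _ = ∑' j, ∑' i, (‖(inner ℂ (b j) (ContinuousLinearMap.adjoint S (b i)) : ℂ)‖₊ ^ 2 : ENNReal) :=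
        ENNReal.tsum_comm
    _ = ∑' j, ∑' i, (‖(inner ℂ (b i) (S (b j)) : ℂ)‖₊ ^ 2 : ENNReal) := by
        apply tsum_congr; intro j; apply tsum_congr; intro i
        rw [adjoint_inner_right, ← inner_conj_symm (b i) (S (b j)), RCLike.nnnorm_conj]
    _ = ∑' j, (‖S (b j)‖₊ ^ 2 : ENNReal) := tsum_congr fun j => parseval_nn b _

private lemma hs_adjoint {S : H →L[ℂ] H} (hS : IsHilbertSchmidt b S) :
    IsHilbertSchmidt b (ContinuousLinearMap.adjoint S) := by
  rw [hs_iff] at hS ⊢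
  rw [hs_adjoint_sum]
  exact hS

private lemma hs_comp_left {S : H →L[ℂ] H} (hS : IsHilbertSchmidt b S) (C : H →L[ℂ] H) :
    IsHilbertSchmidt b (C ∘L S) := by
  refine Summable.of_nonneg_of_le (fun i => by positivity) (fun i => ?_) (hS.mul_left (‖C‖ ^ 2))
  have h1 : ‖(C ∘L S) (b i)‖ ≤ ‖C‖ * ‖S (b i)‖ := C.le_opNorm _
  have h2 : ‖(C ∘L S) (b i)‖ ^ 2 ≤ (‖C‖ * ‖S (b i)‖) ^ 2 :=
    pow_le_pow_left₀ (norm_nonneg _) h1 2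
  nlinarith

private lemma hs_comp_right {S : H →L[ℂ] H} (hS : IsHilbertSchmidt b S) (C : H →L[ℂ] H) :
    IsHilbertSchmidt b (S ∘L C) := by
  have h1 : S ∘L C = ContinuousLinearMap.adjoint
      (ContinuousLinearMap.adjoint C ∘L ContinuousLinearMap.adjoint S) := by
    rw [adjoint_comp, adjoint_adjoint, adjoint_adjoint]
  rw [h1]
  exact hs_adjoint b (hs_comp_left b (hs_adjoint b hS) _)

private lemma summable_re_inner {P Q : H →L[ℂ] H}
    (hP : IsHilbertSchmidt b P) (hQ : IsHilbertSchmidt b Q) :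
    Summable fun i => (inner ℂ (P (b i)) (Q (b i)) : ℂ).re := by
  apply Summable.of_abs
  refine Summable.of_nonneg_of_le (fun i => abs_nonneg _) (fun i => ?_)
    (((hP.add hQ).div_const 2))
  have h1 : |(inner ℂ (P (b i)) (Q (b i)) : ℂ).re| ≤ ‖P (b i)‖ * ‖Q (b i)‖ := by
    calc |(inner ℂ (P (b i)) (Q (b i)) : ℂ).re| ≤ ‖(inner ℂ (P (b i)) (Q (b i)) : ℂ)‖ :=
          Complex.abs_re_le_norm _
      _ ≤ ‖P (b i)‖ * ‖Q (b i)‖ := norm_inner_le_norm _ _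
  have h2 : ‖P (b i)‖ * ‖Q (b i)‖ ≤ (‖P (b i)‖ ^ 2 + ‖Q (b i)‖ ^ 2) / 2 := by
    nlinarith [sq_nonneg (‖P (b i)‖ - ‖Q (b i)‖)]
  linarith

end HS

/-- for trace-class Krein-selfadjoint `W`, the following are equivalent:
(i) `Az = x` admits a W-ILSS for every `x`; (ii) `A` admits an indefinite `W`-inverse;
(iii) `ran A` is `W`-nonnegative and the `J`-trace functional
`X ↦ tr_J((AX−I)^# W (AX−I))` attains a minimum. -/
theorem stmt8 {ι : Type*}
    [TopologicalSpace.SeparableSpace H] [TopologicalSpace.SeparableSpace K]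
    (JH : H →L[ℂ] H) (hJHsa : IsSelfAdjoint JH) (hJH2 : JH ∘L JH = 1)
    (JK : K →L[ℂ] K) (hJKsa : IsSelfAdjoint JK) (hJK2 : JK ∘L JK = 1)
    (b : HilbertBasis ι ℂ H)
    (A : K →L[ℂ] H) (W : H →L[ℂ] H)
    (hW : JH ∘L (ContinuousLinearMap.adjoint W) ∘L JH = W)
    (hWtc : IsTraceClass b W) :
    List.TFAE
      [ -- (i)
        ∀ x : H, ∃ u : K, IsWILSS JH A W x u,
        -- (ii)
        ∃ G : H →L[ℂ] K, ∀ x : H, IsWILSS JH A W x (G x),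
        -- (iii)
        (∀ z : K, 0 ≤ (inner ℂ (JH (W (A z))) (A z) : ℂ).re) ∧
          ∃ X₀ : H →L[ℂ] K, ∀ X : H →L[ℂ] K,
            trJ JH b (errOp JH A W X₀) ≤ trJ JH b (errOp JH A W X) ] := by
  classical
  obtain ⟨S₁, S₂, hS₁, hS₂, hWeq⟩ := hWtc
  set Wh : H →L[ℂ] H := JH ∘L W with hWhdef
  have hJ2 : ∀ y : H, JH (JH y) = y := by
    intro y
    have := ContinuousLinearMap.ext_iff.mp hJH2 y
    simpa using this
  have hJadj : ContinuousLinearMap.adjoint JH = JH := by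
    rw [← ContinuousLinearMap.star_eq_adjoint]; exact hJHsa
  have hWpt : ∀ y : H, ContinuousLinearMap.adjoint W (JH y) = JH (W y) := by
    intro y
    have h0 := ContinuousLinearMap.ext_iff.mp hW y
    simp only [ContinuousLinearMap.comp_apply] at h0
    have h1 := congrArg (fun z => JH z) h0
    rw [hJ2] at h1
    exact h1
  have hWh_sa : ContinuousLinearMap.adjoint Wh = Wh := by
    rw [hWhdef, adjoint_comp, hJadj]
    ext y
    simp only [ContinuousLinearMap.comp_apply]
    exact hWpt y
  set T : K →L[ℂ] K := ContinuousLinearMap.adjoint A ∘L (Wh ∘L A) with hTdef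
  set Bop : H →L[ℂ] K := ContinuousLinearMap.adjoint A ∘L Wh with hBdef
  have hconv : ∀ (u : K) (x : H),
      ContinuousLinearMap.adjoint A (Wh (A u - x)) = T u - Bop x := by
    intro u x
    simp [hTdef, hBdef, map_sub]
  have hD : ∀ (X : H →L[ℂ] K) (y : H), ((A ∘L X : H →L[ℂ] H) - 1) y = A (X y) - y := by
    intro X y; simp
  have htr : ∀ X : H →L[ℂ] K, trJ JH b (errOp JH A W X)
      = ∑' i, (inner ℂ (Wh (A (X (b i)) - b i)) (A (X (b i)) - b i) : ℂ).re := by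
    intro X
    simp only [trJ, errOp, kreinAdjoint]
    apply tsum_congr
    intro i
    simp only [ContinuousLinearMap.comp_apply]
    rw [hJ2, adjoint_inner_left]
    simp only [hD]
    rfl
  have hWh_eq : ∀ y : H, Wh y = (JH ∘L S₁) (S₂ y) := by
    intro y
    simp [hWhdef, hWeq]
  have hsum : ∀ X : H →L[ℂ] K,
      Summable fun i => (inner ℂ (Wh (A (X (b i)) - b i)) (A (X (b i)) - b i) : ℂ).re := by
    intro X
    set D : H →L[ℂ] H := (A ∘L X : H →L[ℂ] H) - 1 with hDdef
    have hDy : ∀ y, D y = A (X y) - y := fun y => hD X y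
    have hP : IsHilbertSchmidt b (S₂ ∘L D) := hs_comp_right b hS₂ D
    have hQ : IsHilbertSchmidt b
        (ContinuousLinearMap.adjoint (JH ∘L S₁) ∘L D) :=
      hs_comp_right b (hs_adjoint b (hs_comp_left b hS₁ JH)) D
    refine (summable_re_inner b hP hQ).congr ?_
    intro i
    simp only [ContinuousLinearMap.comp_apply]
    rw [adjoint_inner_right, ← hWh_eq]
    rw [hDy]
  tfae_have 2 → 1 := by
    rintro ⟨G, hG⟩ x
    exact ⟨G x, hG x⟩
  tfae_have 1 → 2 := by
    intro h1
    have hTB : ∀ x : H, ∃ u : K, T u = Bop x := by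
      intro x
      obtain ⟨u, hu⟩ := h1 x
      have horth := (of_wilss A Wh hWh_sa x u hu).2
      rw [hconv] at horth
      exact ⟨u, by rwa [sub_eq_zero] at horth⟩
    obtain ⟨G, hG⟩ := douglas T Bop hTB
    refine ⟨G, fun x => ?_⟩
    have hpos := (of_wilss A Wh hWh_sa x (h1 x).choose (h1 x).choose_spec).1
    exact to_min A Wh hWh_sa hpos x (G x) (by rw [hconv, hG, sub_self])
  tfae_have 2 → 3 := by
    rintro ⟨G, hG⟩
    constructor
    · exact (of_wilss A Wh hWh_sa 0 (G 0) (hG 0)).1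
    · refine ⟨G, fun X => ?_⟩
      rw [htr G, htr X]
      exact Summable.tsum_le_tsum (fun i => hG (b i) (X (b i))) (hsum G) (hsum X)
  tfae_have 3 → 2 := by
    rintro ⟨hpos, X₀, hX₀⟩
    have hpos' : ∀ v : K, 0 ≤ (inner ℂ (Wh (A v)) (A v) : ℂ).re := hpos
    have hMi : ∀ i : ι,
        ContinuousLinearMap.adjoint A (Wh (A (X₀ (b i)) - b i)) = 0 := by
      intro i
      have hl : ∀ v : K, (inner ℂ (Wh (A v)) (A (X₀ (b i)) - b i) : ℂ) = 0 := by
        intro v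
        refine (key_scalar ((inner ℂ (Wh (A v)) (A v) : ℂ).re)
          ((inner ℂ (Wh (A v)) (A (X₀ (b i)) - b i) : ℂ)) ?_).1
        intro c
        set Y : H →L[ℂ] K := (innerSL ℂ (b i)).smulRight v with hYdef
        have hYj : ∀ j : ι, j ≠ i → Y (b j) = 0 := by
          intro j hj
          have h0 : (inner ℂ (b i) (b j) : ℂ) = 0 := b.orthonormal.2 (Ne.symm hj)
          simp [hYdef, h0]
        have hYi : Y (b i) = v := by
          have h0 : (inner ℂ (b i) (b i) : ℂ) = 1 := by
            rw [inner_self_eq_norm_sq_to_K (𝕜 := ℂ)]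
            rw [b.orthonormal.1 i]
            norm_num
          simp [hYdef, h0, b.orthonormal.1 i]
        have hle := hX₀ (X₀ + c • Y)
        rw [htr X₀, htr (X₀ + c • Y)] at hle
        set f0 : ι → ℝ := fun j =>
          (inner ℂ (Wh (A (X₀ (b j)) - b j)) (A (X₀ (b j)) - b j) : ℂ).re with hf0
        set f1 : ι → ℝ := fun j =>
          (inner ℂ (Wh (A ((X₀ + c • Y) (b j)) - b j))
            (A ((X₀ + c • Y) (b j)) - b j) : ℂ).re with hf1
        have hptj : ∀ j : ι, j ≠ i → f1 j - f0 j = 0 := by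
          intro j hj
          have h0 : (X₀ + c • Y) (b j) = X₀ (b j) := by
            simp [hYj j hj]
          rw [hf1, hf0]
          simp only [h0, sub_self]
        have hpti : f1 i - f0 i
            = ‖c‖ ^ 2 * (inner ℂ (Wh (A v)) (A v) : ℂ).re
              + 2 * ((starRingEnd ℂ) c
                  * (inner ℂ (Wh (A v)) (A (X₀ (b i)) - b i) : ℂ)).re := by
          have h0 : (X₀ + c • Y) (b i) = X₀ (b i) + c • v := by
            simp [hYi]
          have h1 : A ((X₀ + c • Y) (b i)) - b i
              = c • A v + (A (X₀ (b i)) - b i) := by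
            rw [h0, map_add, map_smul]; abel
          rw [hf1, hf0]
          simp only [h1]
          rw [expand_quad_smul Wh hWh_sa (A v) (A (X₀ (b i)) - b i) c]
          ring
        have hs0 : Summable f0 := hsum X₀
        have hs1 : Summable f1 := hsum (X₀ + c • Y)
        have key0 : (∑' j, (f1 j - f0 j)) = (∑' j, f1 j) - ∑' j, f0 j :=
          Summable.tsum_sub hs1 hs0
        have key1 : (∑' j, (f1 j - f0 j)) = f1 i - f0 i :=
          tsum_eq_single i fun j hj => hptj j hj
        rw [← hpti]
        rw [← key1, key0]
        exact sub_nonneg.mpr hle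
      have h2 := hl (ContinuousLinearMap.adjoint A (Wh (A (X₀ (b i)) - b i)))
      rw [conj_inner_op Wh hWh_sa, ← adjoint_inner_right, inner_self_eq_zero] at h2
      exact h2
    set M : H →L[ℂ] K :=
      ContinuousLinearMap.adjoint A ∘L (Wh ∘L ((A ∘L X₀ : H →L[ℂ] H) - 1)) with hMdef
    have hMapp : ∀ y : H, M y = ContinuousLinearMap.adjoint A (Wh (A (X₀ y) - y)) := by
      intro y
      simp only [hMdef, ContinuousLinearMap.comp_apply, hD]
    have hMb : ∀ i : ι, M (b i) = 0 := by
      intro i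
      rw [hMapp]
      exact hMi i
    have hM : ∀ x : H, M x = 0 := by
      have hrange : Set.range b ⊆ (M.ker : Set H) := by
        rintro _ ⟨i, rfl⟩
        exact hMb i
      have hspan : Submodule.span ℂ (Set.range b) ≤ M.ker :=
        Submodule.span_le.mpr hrange
      have hclosed : IsClosed ((M.ker : Submodule ℂ H) : Set H) :=
        ContinuousLinearMap.isClosed_ker M
      have htop : (Submodule.span ℂ (Set.range b)).topologicalClosure ≤ M.ker :=
        Submodule.topologicalClosure_minimal _ hspan hclosed
      rw [b.dense_span] at htop
      intro x
      exact htop Submodule.mem_top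
    refine ⟨X₀, fun x => ?_⟩
    refine to_min A Wh hWh_sa hpos' x (X₀ x) ?_
    rw [← hMapp]
    exact hM x
  tfae_finish
end
end

section
/- Let T, V ∈ L(H), let f₀ ∈ ran V, and let x₀ ∈ H satisfy Vx₀ = f₀. Then x₀ is a solution of the indefinite spline problem, i.e., [Tx₀,Tx₀] ≤ [Tx,Tx] for every x ∈ H with Vx = f₀, if and only if T(ker V) is a nonnegative subspace of H (i.e., [Tz,Tz] ≥ 0 for every z ∈ ker V) and [Tx₀, Tz] = 0 for every z ∈ ker V. -/
open ContinuousLinearMap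

noncomputable section

variable {H : Type*} [NormedAddCommGroup H] [InnerProductSpace ℂ H] [CompleteSpace H]

private lemma aux_quad (b c : ℝ) (h : ∀ t : ℝ, 0 ≤ 2 * t * b + t ^ 2 * c) : b = 0 := by
  by_contra hb
  set ε : ℝ := 1 / (1 + |c|) with hε
  have hεpos : 0 < ε := by positivity
  have h1 : ε * |c| < 2 := by
    have h2 : ε * |c| = |c| / (1 + |c|) := by rw [hε]; ring
    rw [h2]
    have : |c| / (1 + |c|) < 1 := by
      rw [div_lt_one (by positivity)]; linarith
    linarith
  have := h (-b * ε)
  have hb2 : 0 < b ^ 2 := by positivity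
  nlinarith [abs_nonneg c, neg_abs_le c, le_abs_self c, mul_pos hεpos hb2]

private lemma conj_inner_J (J : H →L[ℂ] H) (hJsa : IsSelfAdjoint J) (u v : H) :
    (inner ℂ (J v) u : ℂ) = starRingEnd ℂ (inner ℂ (J u) v) := by
  have hadj : ContinuousLinearMap.adjoint J = J := hJsa
  calc (inner ℂ (J v) u : ℂ) = inner ℂ (ContinuousLinearMap.adjoint J v) u := by rw [hadj]
    _ = inner ℂ v (J u) := ContinuousLinearMap.adjoint_inner_left J u v
    _ = starRingEnd ℂ (inner ℂ (J u) v) := (inner_conj_symm v (J u)).symm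

private lemma expand_inner (J : H →L[ℂ] H) (hJsa : IsSelfAdjoint J) (T : H →L[ℂ] H)
    (x₀ z : H) (c : ℂ) :
    (inner ℂ (J (T (x₀ + c • z))) (T (x₀ + c • z)) : ℂ).re =
      (inner ℂ (J (T x₀)) (T x₀) : ℂ).re
        + 2 * (c * (inner ℂ (J (T x₀)) (T z) : ℂ)).re
        + Complex.normSq c * (inner ℂ (J (T z)) (T z) : ℂ).re := by
  have hc : (inner ℂ (J (T z)) (T x₀) : ℂ) = starRingEnd ℂ (inner ℂ (J (T x₀)) (T z)) :=
    conj_inner_J J hJsa (T x₀) (T z)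
  have key : (inner ℂ (J (T (x₀ + c • z))) (T (x₀ + c • z)) : ℂ) =
      (inner ℂ (J (T x₀)) (T x₀) : ℂ)
        + (c * (inner ℂ (J (T x₀)) (T z) : ℂ)
            + starRingEnd ℂ (c * (inner ℂ (J (T x₀)) (T z) : ℂ)))
        + (Complex.normSq c : ℂ) * (inner ℂ (J (T z)) (T z) : ℂ) := by
    simp only [map_add, map_smul, inner_add_left, inner_add_right, inner_smul_left,
      inner_smul_right, hc, map_mul, Complex.normSq_eq_conj_mul_self]
    ring
  rw [key]
  simp only [Complex.add_re, Complex.mul_re, Complex.conj_re, Complex.conj_im,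
    Complex.ofReal_re, Complex.ofReal_im]
  ring

/-- `x₀` (with `V x₀ = f₀`) solves the indefinite spline problem
`min [Tx,Tx] s.t. Vx = f₀` iff `T(ker V)` is a nonnegative subspace and
`[Tx₀, Tz] = 0` for every `z ∈ ker V`. Here `[x,y] = ⟨Jx,y⟩`. -/
theorem stmt9
    [TopologicalSpace.SeparableSpace H]
    (J : H →L[ℂ] H) (hJsa : IsSelfAdjoint J) (hJ2 : J ∘L J = 1)
    (T V : H →L[ℂ] H) (f₀ : H) (hf₀ : f₀ ∈ Set.range V)
    (x₀ : H) (hx₀ : V x₀ = f₀) :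
    (∀ x : H, V x = f₀ →
        (inner ℂ (J (T x₀)) (T x₀) : ℂ).re ≤ (inner ℂ (J (T x)) (T x) : ℂ).re) ↔
      ((∀ z : H, V z = 0 → 0 ≤ (inner ℂ (J (T z)) (T z) : ℂ).re) ∧
        ∀ z : H, V z = 0 → (inner ℂ (J (T x₀)) (T z) : ℂ) = 0) := by
  constructor
  · intro h
    have key : ∀ z : H, V z = 0 → ∀ c : ℂ,
        0 ≤ 2 * (c * (inner ℂ (J (T x₀)) (T z) : ℂ)).re
            + Complex.normSq c * (inner ℂ (J (T z)) (T z) : ℂ).re := by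
      intro z hz c
      have hfeas : V (x₀ + c • z) = f₀ := by
        simp [map_add, map_smul, hz, hx₀]
      have := h (x₀ + c • z) hfeas
      rw [expand_inner J hJsa T x₀ z c] at this
      linarith
    have horth : ∀ z : H, V z = 0 → (inner ℂ (J (T x₀)) (T z) : ℂ) = 0 := by
      intro z hz
      set B : ℂ := (inner ℂ (J (T x₀)) (T z) : ℂ) with hB
      set C : ℝ := (inner ℂ (J (T z)) (T z) : ℂ).re with hC
      have hre : B.re = 0 := by
        apply aux_quad B.re C
        intro t
        have h0 := key z hz (t : ℂ)
        rw [Complex.re_ofReal_mul, Complex.normSq_ofReal, ← hB, ← hC] at h0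
        nlinarith [h0]
      have him : B.im = 0 := by
        have h0' : -B.im = 0 := by
          apply aux_quad (-B.im) C
          intro t
          have h0 := key z hz ((t : ℂ) * Complex.I)
          have hrw : (((t : ℂ) * Complex.I) * B).re = t * (-B.im) := by
            simp [Complex.mul_re, Complex.mul_im]
            try ring
          have hns : Complex.normSq ((t : ℂ) * Complex.I) = t ^ 2 := by
            simp [Complex.normSq_mul, sq, Complex.normSq_ofReal]
          rw [hrw, hns, ← hC] at h0
          linarith [h0]
        linarith
      exact Complex.ext hre him
    refine ⟨fun z hz => ?_, horth⟩
    have h0 := key z hz 1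
    rw [horth z hz] at h0
    simpa using h0
  · rintro ⟨hpos, horth⟩ x hx
    set z : H := x - x₀ with hzdef
    have hz : V z = 0 := by simp [hzdef, map_sub, hx, hx₀]
    have hxeq : x = x₀ + (1 : ℂ) • z := by simp [hzdef]
    rw [hxeq, expand_inner J hJsa T x₀ z 1]
    have h1 := hpos z hz
    have h2 := horth z hz
    simp only [one_mul, h2, Complex.zero_re, mul_zero, add_zero, Complex.normSq_one]
    linarith
end
end
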